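/- arXiv:1601.01638 — 4 statements merged into one kernel-verified Lean document; each statement's English description precedes it below -/
import Mathlib

section
/- Let l ∈ (−1/2, 0]. There exists a constant C > 0 depending only on l such that for all x, y > 0 and all t > 0, (√(xy)/(2t)) · |J_{−l−1/2}(xy/(2t))| ≤ C · t^{−1/2}. (This is the O(|t|^{−1/2}) L¹ → L^∞ dispersive estimate for the evolution group e^{−itH_{π/2}}, whose kernel has modulus (√(xy)/(2t))|J_{−l−1/2}(xy/(2t))|.) -/
open MeasureTheory Real Filter Set

/-- The Bessel function of the first kind of order `ν`,
`J_ν(r) = (r/2)^ν ∑_{n=0}^∞ (−r²/4)^n / (n! Γ(ν+n+1))`. -/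
noncomputable def besselJ (ν r : ℝ) : ℝ :=
  (r / 2) ^ ν * ∑' n : ℕ, (-(r ^ 2 / 4)) ^ n / ((n.factorial : ℝ) * Real.Gamma (ν + n + 1))

section BesselAux

variable {ν : ℝ}


noncomputable def bJc (ν : ℝ) (n : ℕ) : ℝ :=
  (-(1:ℝ)/4) ^ n / ((n.factorial : ℝ) * Real.Gamma (ν + n + 1))

noncomputable def bJf (ν x : ℝ) : ℝ := ∑' n : ℕ, bJc ν n * x ^ n
noncomputable def bJf1 (ν x : ℝ) : ℝ := ∑' n : ℕ, ((n : ℝ) + 1) * bJc ν (n+1) * x ^ n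
noncomputable def bJf2 (ν x : ℝ) : ℝ :=
  ∑' n : ℕ, ((n : ℝ) + 2) * ((n : ℝ) + 1) * bJc ν (n+2) * x ^ n

variable {ν : ℝ}

lemma bJ_val_pos (hν : -(1/2 : ℝ) ≤ ν) (n : ℕ) : 0 < ν + n + 1 := by
  have : (0:ℝ) ≤ n := n.cast_nonneg
  linarith

lemma bJ_gamma_pos (hν : -(1/2 : ℝ) ≤ ν) (n : ℕ) : 0 < Real.Gamma (ν + n + 1) :=
  Real.Gamma_pos_of_pos (bJ_val_pos hν n)

lemma bJc_rec (hν : -(1/2 : ℝ) ≤ ν) (n : ℕ) :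
    4 * ((n : ℝ) + 1) * (ν + n + 1) * bJc ν (n+1) = - bJc ν n := by
  have hg := bJ_gamma_pos hν n
  have hv := bJ_val_pos hν n
  have h2 : Real.Gamma (ν + (n+1 : ℕ) + 1) = (ν + n + 1) * Real.Gamma (ν + n + 1) := by
    have h1 : ν + ((n : ℝ) + 1) + 1 = (ν + n + 1) + 1 := by ring
    rw [Nat.cast_add, Nat.cast_one, h1, Real.Gamma_add_one hv.ne']
  have h3 : ((n+1).factorial : ℝ) = ((n : ℝ) + 1) * n.factorial := by
    rw [Nat.factorial_succ]; push_cast; ring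
  have hfac : (0:ℝ) < n.factorial := by positivity
  unfold bJc
  rw [h2, h3, pow_succ]
  field_simp

lemma bJc_bound (hν : -(1/2 : ℝ) ≤ ν) (n : ℕ) :
    |bJc ν n| ≤ |bJc ν 0| * (1/2) ^ n / n.factorial := by
  induction n with
  | zero => simp
  | succ n ih =>
    have hv := bJ_val_pos hν n
    have hrec := bJc_rec hν n
    have hd : (0:ℝ) < 4 * ((n : ℝ) + 1) * (ν + n + 1) := by positivity
    have habs : 4 * ((n : ℝ) + 1) * (ν + n + 1) * |bJc ν (n+1)| = |bJc ν n| := by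
      rw [← abs_of_pos hd, ← abs_mul, hrec, abs_neg]
    have hd2 : 2 * ((n : ℝ) + 1) ≤ 4 * ((n : ℝ) + 1) * (ν + n + 1) := by
      have h1 : (1:ℝ)/2 ≤ ν + n + 1 := by have : (0:ℝ) ≤ n := n.cast_nonneg; linarith
      nlinarith [n.cast_nonneg (α := ℝ)]
    have habs2 : 2 * ((n : ℝ) + 1) * |bJc ν (n+1)| ≤ |bJc ν n| := by
      calc 2 * ((n : ℝ) + 1) * |bJc ν (n+1)| ≤ 4 * ((n : ℝ) + 1) * (ν + n + 1) * |bJc ν (n+1)| := by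
            apply mul_le_mul_of_nonneg_right hd2 (abs_nonneg _)
        _ = |bJc ν n| := habs
    have h3 : ((n+1).factorial : ℝ) = ((n : ℝ) + 1) * n.factorial := by
      rw [Nat.factorial_succ]; push_cast; ring
    have hfac : (0:ℝ) < n.factorial := by positivity
    have hnp : (0:ℝ) < (n : ℝ) + 1 := by positivity
    rw [h3, pow_succ, le_div_iff₀ (by positivity)]
    have ih' : |bJc ν n| * n.factorial ≤ |bJc ν 0| * (1/2) ^ n := (le_div_iff₀ hfac).mp ih
    calc |bJc ν (n+1)| * (((n:ℝ)+1) * n.factorial)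
        = (2 * ((n : ℝ) + 1) * |bJc ν (n+1)|) * n.factorial * (1/2) := by ring
      _ ≤ |bJc ν n| * n.factorial * (1/2) := by
          apply mul_le_mul_of_nonneg_right (mul_le_mul_of_nonneg_right habs2 hfac.le) (by norm_num)
      _ ≤ |bJc ν 0| * (1/2) ^ n * (1/2) := by
          apply mul_le_mul_of_nonneg_right ih' (by norm_num)
      _ = |bJc ν 0| * ((1/2) ^ n * (1/2)) := by ring


lemma bJ_summable_aux (c : ℕ → ℝ) (K x : ℝ) (h : ∀ n, |c n| ≤ K / n.factorial) :
    Summable (fun n => c n * x ^ n) := by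
  apply Summable.of_norm
  apply Summable.of_nonneg_of_le (fun n => norm_nonneg _) (fun n => ?_)
    ((Real.summable_pow_div_factorial |x|).mul_left K)
  have hfac : (0:ℝ) < n.factorial := by positivity
  calc ‖c n * x ^ n‖ = |c n| * |x| ^ n := by
        rw [norm_mul, norm_pow, Real.norm_eq_abs, Real.norm_eq_abs]
    _ ≤ K / n.factorial * |x| ^ n := by
        apply mul_le_mul_of_nonneg_right (h n) (by positivity)
    _ = K * (|x| ^ n / n.factorial) := by ring

lemma nat_le_two_pow_real (n : ℕ) : (n : ℝ) ≤ 2 ^ n := by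
  exact_mod_cast (@Nat.lt_two_pow_self n).le

lemma bJ_hasDerivAt_series (c : ℕ → ℝ) (K : ℝ) (hK : ∀ n, |c n| ≤ K / n.factorial) (x : ℝ) :
    HasDerivAt (fun y => ∑' n : ℕ, c n * y ^ n)
      (∑' n : ℕ, ((n : ℝ) + 1) * c (n+1) * x ^ n) x := by
  have hK0 : 0 ≤ K := le_trans (le_trans (abs_nonneg _) (hK 0)) (by simp)
  set R : ℝ := |x| + 1 with hR
  have hR1 : 1 ≤ R := by have := abs_nonneg x; linarith
  have hR0 : 0 < R := by linarith
  -- the derivative bound on the ball of radius R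
  have key : ∀ n : ℕ, ∀ y ∈ Metric.ball (0:ℝ) R, ‖c n * ((n : ℝ) * y ^ (n-1))‖ ≤ K * ((2*R) ^ n / n.factorial) := by
    intro n y hy
    have hyR : |y| < R := by simpa [Real.dist_eq] using hy
    have hfac : (0:ℝ) < n.factorial := by positivity
    have h1 : ‖c n * ((n : ℝ) * y ^ (n-1))‖ = |c n| * ((n : ℝ) * |y| ^ (n-1)) := by
      rw [norm_mul, norm_mul, norm_pow, Real.norm_eq_abs, Real.norm_eq_abs]
      simp [abs_of_nonneg (n.cast_nonneg (α := ℝ))]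
    rw [h1]
    have h2 : (n : ℝ) * |y| ^ (n-1) ≤ 2 ^ n * R ^ n := by
      have hy1 : |y| ^ (n-1) ≤ R ^ (n-1) :=
        pow_le_pow_left₀ (abs_nonneg _) hyR.le _
      have hy2 : R ^ (n-1) ≤ R ^ n := pow_le_pow_right₀ hR1 (Nat.sub_le n 1)
      calc (n : ℝ) * |y| ^ (n-1) ≤ 2 ^ n * R ^ (n-1) := by
            apply mul_le_mul (nat_le_two_pow_real n) hy1 (by positivity) (by positivity)
        _ ≤ 2 ^ n * R ^ n := by
            apply mul_le_mul_of_nonneg_left hy2 (by positivity)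
    calc |c n| * ((n : ℝ) * |y| ^ (n-1)) ≤ K / n.factorial * (2 ^ n * R ^ n) := by
          apply mul_le_mul (hK n) h2 (by positivity) (by positivity)
      _ = K * ((2*R) ^ n / n.factorial) := by rw [mul_pow]; ring
  have hx : x ∈ Metric.ball (0:ℝ) R := by
    simp [Real.dist_eq, hR]
  have hd := hasDerivAt_tsum_of_isPreconnected
    ((Real.summable_pow_div_factorial (2*R)).mul_left K)
    Metric.isOpen_ball (convex_ball (0:ℝ) R).isPreconnected
    (fun n y _ => (hasDerivAt_pow n y).const_mul (c n))
    key hx (bJ_summable_aux c K x hK) hx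
  have hsum : Summable (fun n : ℕ => c n * ((n : ℝ) * x ^ (n-1))) := by
    apply Summable.of_norm
    apply Summable.of_nonneg_of_le (fun n => norm_nonneg _)
      (fun n => key n x hx) ((Real.summable_pow_div_factorial (2*R)).mul_left K)
  have heq : ∑' n : ℕ, c n * ((n : ℝ) * x ^ (n-1)) = ∑' n : ℕ, ((n : ℝ) + 1) * c (n+1) * x ^ n := by
    rw [hsum.tsum_eq_zero_add]
    simp only [Nat.cast_zero, zero_mul, mul_zero, zero_add]
    apply tsum_congr
    intro n
    have : (n + 1) - 1 = n := rfl
    rw [this]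
    push_cast
    ring
  rw [← heq]
  exact hd




lemma fact_succ_cast (n : ℕ) : ((n+1).factorial : ℝ) = ((n : ℝ) + 1) * n.factorial := by
  rw [Nat.factorial_succ]; push_cast; ring

lemma bJc_K0 (hν : -(1/2 : ℝ) ≤ ν) (n : ℕ) : |bJc ν n| ≤ |bJc ν 0| / n.factorial := by
  refine le_trans (bJc_bound hν n) ?_
  have hfac : (0:ℝ) < n.factorial := by positivity
  rw [div_le_div_iff_of_pos_right hfac]
  have h1 : ((1:ℝ)/2) ^ n ≤ 1 := pow_le_one₀ (by norm_num) (by norm_num)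
  nlinarith [abs_nonneg (bJc ν 0)]

lemma bJc_K1 (hν : -(1/2 : ℝ) ≤ ν) (n : ℕ) :
    |((n : ℝ) + 1) * bJc ν (n+1)| ≤ |bJc ν 0| / n.factorial := by
  have hb := bJc_bound hν (n+1)
  have hfac : (0:ℝ) < n.factorial := by positivity
  have hnp : (0:ℝ) < (n : ℝ) + 1 := by positivity
  rw [abs_mul, abs_of_pos hnp]
  rw [fact_succ_cast] at hb
  have h1 : ((n : ℝ) + 1) * |bJc ν (n+1)| ≤ ((n : ℝ) + 1) * (|bJc ν 0| * (1/2) ^ (n+1) / (((n : ℝ) + 1) * n.factorial)) :=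
    mul_le_mul_of_nonneg_left hb hnp.le
  refine le_trans h1 ?_
  have heq : ((n:ℝ)+1) * (|bJc ν 0| * (1/2) ^ (n+1) / (((n:ℝ)+1) * n.factorial))
      = |bJc ν 0| * (1/2) ^ (n+1) / n.factorial := by
    field_simp
  rw [heq]
  gcongr
  have h2 : ((1:ℝ)/2) ^ (n+1) ≤ 1 := pow_le_one₀ (by norm_num) (by norm_num)
  nlinarith [abs_nonneg (bJc ν 0)]

lemma bJc_K2 (hν : -(1/2 : ℝ) ≤ ν) (n : ℕ) :
    |((n : ℝ) + 2) * ((n : ℝ) + 1) * bJc ν (n+2)| ≤ |bJc ν 0| / n.factorial := by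
  have hb := bJc_bound hν (n+2)
  have hfac : (0:ℝ) < n.factorial := by positivity
  have hnp : (0:ℝ) < ((n : ℝ) + 2) * ((n : ℝ) + 1) := by positivity
  rw [abs_mul, abs_of_pos hnp]
  have hf2 : (((n+2)).factorial : ℝ) = ((n : ℝ) + 2) * (((n : ℝ) + 1) * n.factorial) := by
    rw [show n + 2 = (n+1) + 1 from rfl, fact_succ_cast, fact_succ_cast]; push_cast; ring
  rw [hf2] at hb
  have h1 := mul_le_mul_of_nonneg_left hb hnp.le
  refine le_trans h1 ?_
  have heq : ((n:ℝ)+2) * ((n:ℝ)+1) * (|bJc ν 0| * (1/2) ^ (n+2) / (((n:ℝ)+2) * (((n:ℝ)+1) * n.factorial)))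
      = |bJc ν 0| * (1/2) ^ (n+2) / n.factorial := by
    field_simp
  rw [heq]
  gcongr
  have h2 : ((1:ℝ)/2) ^ (n+2) ≤ 1 := pow_le_one₀ (by norm_num) (by norm_num)
  nlinarith [abs_nonneg (bJc ν 0)]

lemma bJc_KT (hν : -(1/2 : ℝ) ≤ ν) (n : ℕ) :
    |4 * ((n : ℝ) + 1) * (n : ℝ) * bJc ν (n+1)| ≤ 2 * |bJc ν 0| / n.factorial := by
  have hb := bJc_bound hν (n+1)
  have hfac : (0:ℝ) < n.factorial := by positivity
  have hnn : (0:ℝ) ≤ (n:ℝ) := n.cast_nonneg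
  have hnp : (0:ℝ) ≤ 4 * ((n : ℝ) + 1) * (n : ℝ) := by positivity
  rw [abs_mul, abs_of_nonneg hnp]
  rw [fact_succ_cast] at hb
  have h1 := mul_le_mul_of_nonneg_left hb hnp
  refine le_trans h1 ?_
  have hkey : (n : ℝ) * (1/2) ^ n ≤ 1 := by
    have h2 : ((1:ℝ)/2) ^ n = 1 / 2 ^ n := by rw [div_pow, one_pow]
    rw [h2, mul_one_div, div_le_one (by positivity)]
    exact nat_le_two_pow_real n
  have heq : 4 * ((n:ℝ)+1) * (n:ℝ) * (|bJc ν 0| * (1/2) ^ (n+1) / (((n:ℝ)+1) * n.factorial))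
      = 2 * ((n:ℝ) * (1/2) ^ n) * |bJc ν 0| / n.factorial := by
    rw [pow_succ]; field_simp; ring
  rw [heq]
  gcongr
  nlinarith [abs_nonneg (bJc ν 0), mul_nonneg (n.cast_nonneg (α := ℝ)) (pow_nonneg (by norm_num : (0:ℝ) ≤ 1/2) n)]

lemma hasDerivAt_bJf (hν : -(1/2 : ℝ) ≤ ν) (x : ℝ) : HasDerivAt (bJf ν) (bJf1 ν x) x :=
  bJ_hasDerivAt_series (bJc ν) (|bJc ν 0|) (bJc_K0 hν) x

lemma hasDerivAt_bJf1 (hν : -(1/2 : ℝ) ≤ ν) (x : ℝ) : HasDerivAt (bJf1 ν) (bJf2 ν x) x := by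
  have h := bJ_hasDerivAt_series (fun n => ((n : ℝ) + 1) * bJc ν (n+1)) (|bJc ν 0|) (bJc_K1 hν) x
  have h2 : bJf2 ν x = ∑' n : ℕ, ((n : ℝ) + 1) * ((((n+1:ℕ) : ℝ) + 1) * bJc ν (n+1+1)) * x ^ n :=
    tsum_congr (fun n => by push_cast; ring)
  rw [h2]
  exact h

lemma bJ_ode (hν : -(1/2 : ℝ) ≤ ν) (x : ℝ) :
    4 * x * bJf2 ν x + (4*ν+4) * bJf1 ν x + bJf ν x = 0 := by
  have hT : Summable (fun n : ℕ => (4 * ((n : ℝ) + 1) * (n : ℝ) * bJc ν (n+1)) * x ^ n) :=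
    bJ_summable_aux _ (2 * |bJc ν 0|) x (bJc_KT hν)
  have hS1 : Summable (fun n : ℕ => (((n : ℝ) + 1) * bJc ν (n+1)) * x ^ n) :=
    bJ_summable_aux _ (|bJc ν 0|) x (bJc_K1 hν)
  have hS0 : Summable (fun n : ℕ => bJc ν n * x ^ n) :=
    bJ_summable_aux _ (|bJc ν 0|) x (bJc_K0 hν)
  have claim1 : 4 * x * bJf2 ν x = ∑' n : ℕ, (4 * ((n : ℝ) + 1) * (n : ℝ) * bJc ν (n+1)) * x ^ n := by
    rw [hT.tsum_eq_zero_add]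
    simp only [Nat.cast_zero, mul_zero, zero_mul, zero_add]
    rw [bJf2, ← tsum_mul_left]
    apply tsum_congr; intro n; push_cast; ring
  have claim2 : (4*ν+4) * bJf1 ν x = ∑' n : ℕ, ((4*ν+4) * (((n : ℝ) + 1) * bJc ν (n+1) * x ^ n)) := by
    rw [bJf1, ← tsum_mul_left]
  rw [claim1, claim2, bJf]
  rw [← Summable.tsum_add hT (by simpa [mul_assoc] using hS1.mul_left (4*ν+4)),
      ← Summable.tsum_add (hT.add (by simpa [mul_assoc] using hS1.mul_left (4*ν+4))) hS0]
  have : ∀ n : ℕ, (4 * ((n : ℝ) + 1) * (n : ℝ) * bJc ν (n+1)) * x ^ n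
      + (4*ν+4) * (((n : ℝ) + 1) * bJc ν (n+1) * x ^ n) + bJc ν n * x ^ n = 0 := by
    intro n
    have h := bJc_rec hν n
    linear_combination (x ^ n) * h
  simp only [this, tsum_zero]

noncomputable def bG (ν r : ℝ) : ℝ := r ^ (ν + 1/2) * bJf ν (r^2)
noncomputable def bG1 (ν r : ℝ) : ℝ :=
  (ν + 1/2) * r ^ (ν + 1/2 - 1) * bJf ν (r^2) + r ^ (ν + 1/2) * (bJf1 ν (r^2) * (2*r))
noncomputable def bG2 (ν r : ℝ) : ℝ :=
  ((ν + 1/2) * ((ν + 1/2 - 1) * r ^ (ν + 1/2 - 1 - 1)) * bJf ν (r^2)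
    + (ν + 1/2) * r ^ (ν + 1/2 - 1) * (bJf1 ν (r^2) * (2*r)))
  + ((ν + 1/2) * r ^ (ν + 1/2 - 1) * (bJf1 ν (r^2) * (2*r))
    + r ^ (ν + 1/2) * ((bJf2 ν (r^2) * (2*r)) * (2*r) + bJf1 ν (r^2) * 2))
noncomputable def bE (ν r : ℝ) : ℝ := (bG1 ν r)^2 + (1 + (1/4 - ν^2)/r^2) * (bG ν r)^2

lemma hasDerivAt_sq_fun (r : ℝ) : HasDerivAt (fun s : ℝ => s^2) (2*r) r := by
  simpa using hasDerivAt_pow 2 r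

lemma hasDerivAt_bG (hν : -(1/2 : ℝ) ≤ ν) {r : ℝ} (hr : 0 < r) :
    HasDerivAt (bG ν) (bG1 ν r) r := by
  have h1 : HasDerivAt (fun s : ℝ => s ^ (ν + 1/2)) ((ν + 1/2) * r ^ (ν + 1/2 - 1)) r :=
    Real.hasDerivAt_rpow_const (Or.inl hr.ne')
  have h2 : HasDerivAt (fun s : ℝ => bJf ν (s^2)) (bJf1 ν (r^2) * (2*r)) r :=
    by have h := (hasDerivAt_bJf hν (r^2)).comp r (hasDerivAt_sq_fun r); exact h
  exact h1.mul h2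

lemma hasDerivAt_bG1 (hν : -(1/2 : ℝ) ≤ ν) {r : ℝ} (hr : 0 < r) :
    HasDerivAt (bG1 ν) (bG2 ν r) r := by
  have h1 : HasDerivAt (fun s : ℝ => s ^ (ν + 1/2)) ((ν + 1/2) * r ^ (ν + 1/2 - 1)) r :=
    Real.hasDerivAt_rpow_const (Or.inl hr.ne')
  have h2 : HasDerivAt (fun s : ℝ => bJf ν (s^2)) (bJf1 ν (r^2) * (2*r)) r :=
    by have h := (hasDerivAt_bJf hν (r^2)).comp r (hasDerivAt_sq_fun r); exact h
  have h3 : HasDerivAt (fun s : ℝ => (ν + 1/2) * s ^ (ν + 1/2 - 1))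
      ((ν + 1/2) * ((ν + 1/2 - 1) * r ^ (ν + 1/2 - 1 - 1))) r :=
    (Real.hasDerivAt_rpow_const (Or.inl hr.ne')).const_mul (ν + 1/2)
  have h2' : HasDerivAt (fun s : ℝ => bJf1 ν (s^2)) (bJf2 ν (r^2) * (2*r)) r :=
    by have h := (hasDerivAt_bJf1 hν (r^2)).comp r (hasDerivAt_sq_fun r); exact h
  have h5 : HasDerivAt (fun s : ℝ => 2*s) 2 r := by
    simpa using (hasDerivAt_id r).const_mul (2:ℝ)
  have h4 : HasDerivAt (fun s : ℝ => bJf1 ν (s^2) * (2*s))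
      ((bJf2 ν (r^2) * (2*r)) * (2*r) + bJf1 ν (r^2) * 2) r := h2'.mul h5
  exact (h3.mul h2).add (h1.mul h4)

lemma bG2_eq (hν : -(1/2 : ℝ) ≤ ν) {r : ℝ} (hr : 0 < r) :
    bG2 ν r = -((1 + (1/4 - ν^2)/r^2) * bG ν r) := by
  have key := bJ_ode hν (r^2)
  have h1 : r ^ (ν + 1/2 - 1) = r ^ (ν + 1/2) / r := by
    rw [Real.rpow_sub hr, Real.rpow_one]
  have h2 : r ^ (ν + 1/2 - 1 - 1) = r ^ (ν + 1/2) / r^2 := by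
    rw [Real.rpow_sub hr, Real.rpow_sub hr, Real.rpow_one, div_div, sq]
  unfold bG2 bG
  rw [h1, h2]
  set P := r ^ (ν + 1/2) with hP
  field_simp
  linear_combination (16 * P * r^2) * key

lemma hasDerivAt_bE (hν : -(1/2 : ℝ) ≤ ν) {r : ℝ} (hr : 0 < r) :
    HasDerivAt (bE ν) (-(2*(1/4 - ν^2)) * (bG ν r)^2 / r^3) r := by
  have hG := hasDerivAt_bG hν hr
  have hG1 := hasDerivAt_bG1 hν hr
  have hw : HasDerivAt (fun s : ℝ => 1 + (1/4 - ν^2)/s^2)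
      ((0 * r^2 - (1/4 - ν^2) * (2*r)) / (r^2)^2) r := by
    have := (hasDerivAt_const r (1/4 - ν^2)).div (hasDerivAt_sq_fun r) (by positivity)
    exact this.const_add 1
  have hE := (hG1.pow 2).add (hw.mul (hG.pow 2))
  have hfun : (bG1 ν ^ 2 + (fun s : ℝ => 1 + (1/4 - ν^2)/s^2) * bG ν ^ 2) = bE ν := by
    ext s; simp only [Pi.add_apply, Pi.mul_apply, Pi.pow_apply]; rfl
  rw [hfun] at hE
  refine hE.congr_deriv ?_
  rw [bG2_eq hν hr, Pi.pow_apply]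
  field_simp
  ring

lemma bE_antitone (hν : -(1/2 : ℝ) ≤ ν) (hν2 : ν ≤ 1/2) : AntitoneOn (bE ν) (Ici 1) := by
  have hc : (0:ℝ) ≤ 1/4 - ν^2 := by nlinarith
  apply antitoneOn_of_deriv_nonpos (convex_Ici 1)
  · intro s hs
    exact (hasDerivAt_bE hν (lt_of_lt_of_le zero_lt_one hs)).continuousAt.continuousWithinAt
  · intro s hs
    rw [interior_Ici] at hs
    exact (hasDerivAt_bE hν (lt_trans zero_lt_one hs)).differentiableAt.differentiableWithinAt
  · intro s hs
    rw [interior_Ici] at hs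
    have h0 : (0:ℝ) < s := lt_trans zero_lt_one hs
    rw [(hasDerivAt_bE hν h0).deriv]
    apply div_nonpos_of_nonpos_of_nonneg _ (by positivity)
    nlinarith [sq_nonneg (bG ν s)]

lemma bJf_le (hν : -(1/2 : ℝ) ≤ ν) {x : ℝ} (hx : |x| ≤ 1) :
    |bJf ν x| ≤ 2 * |bJc ν 0| := by
  have hgs : HasSum (fun n : ℕ => |bJc ν 0| * (1/2)^n) (|bJc ν 0| * 2) := by
    have h := hasSum_geometric_of_lt_one (by norm_num : (0:ℝ) ≤ 1/2) (by norm_num : (1/2:ℝ) < 1)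
    have h2 : ((1:ℝ) - 1/2)⁻¹ = 2 := by norm_num
    rw [h2] at h
    exact h.mul_left _
  have hb : ∀ n : ℕ, ‖bJc ν n * x ^ n‖ ≤ |bJc ν 0| * (1/2)^n := by
    intro n
    have hfac : (1:ℝ) ≤ n.factorial := by exact_mod_cast n.factorial_pos
    have h1 : |x| ^ n ≤ 1 := pow_le_one₀ (abs_nonneg x) hx
    calc ‖bJc ν n * x ^ n‖ = |bJc ν n| * |x| ^ n := by
          rw [norm_mul, norm_pow, Real.norm_eq_abs, Real.norm_eq_abs]
      _ ≤ (|bJc ν 0| * (1/2) ^ n / n.factorial) * 1 :=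
          mul_le_mul (bJc_bound hν n) h1 (by positivity) (by positivity)
      _ ≤ |bJc ν 0| * (1/2)^n := by
          rw [mul_one]
          exact div_le_self (by positivity) hfac
  have := tsum_of_norm_bounded hgs hb
  rw [Real.norm_eq_abs] at this
  calc |bJf ν x| ≤ |bJc ν 0| * 2 := this
    _ = 2 * |bJc ν 0| := by ring

lemma bG_bounded (hν : -(1/2 : ℝ) ≤ ν) (hν2 : ν ≤ 1/2) :
    ∃ M : ℝ, 0 < M ∧ ∀ r : ℝ, 0 < r → |bG ν r| ≤ M := by
  have hc : (0:ℝ) ≤ 1/4 - ν^2 := by nlinarith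
  refine ⟨max (Real.sqrt (bE ν 1)) (2 * |bJc ν 0|) + 1, by positivity, ?_⟩
  intro r hr
  rcases le_or_gt r 1 with h1 | h1
  · have hb1 : r ^ (ν + 1/2) ≤ 1 := Real.rpow_le_one hr.le h1 (by linarith)
    have hb2 : |bJf ν (r^2)| ≤ 2 * |bJc ν 0| := by
      apply bJf_le hν
      rw [abs_of_nonneg (sq_nonneg r)]
      nlinarith
    have : |bG ν r| ≤ 2 * |bJc ν 0| := by
      unfold bG
      rw [abs_mul, abs_of_pos (Real.rpow_pos_of_pos hr _)]
      calc r ^ (ν + 1/2) * |bJf ν (r^2)| ≤ 1 * (2 * |bJc ν 0|) :=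
            mul_le_mul hb1 hb2 (abs_nonneg _) (by norm_num)
        _ = 2 * |bJc ν 0| := by ring
    calc |bG ν r| ≤ 2 * |bJc ν 0| := this
      _ ≤ max (Real.sqrt (bE ν 1)) (2 * |bJc ν 0|) + 1 := by
          have := le_max_right (Real.sqrt (bE ν 1)) (2 * |bJc ν 0|)
          linarith
  · have hEr : bE ν r ≤ bE ν 1 :=
      bE_antitone hν hν2 (self_mem_Ici) (le_of_lt h1) (le_of_lt h1)
    have hsq : (bG ν r)^2 ≤ bE ν r := by
      unfold bE
      have h2 : (0:ℝ) ≤ (1/4 - ν^2)/r^2 := by positivity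
      nlinarith [sq_nonneg (bG1 ν r), sq_nonneg (bG ν r)]
    have : |bG ν r| ≤ Real.sqrt (bE ν 1) := Real.abs_le_sqrt (le_trans hsq hEr)
    calc |bG ν r| ≤ Real.sqrt (bE ν 1) := this
      _ ≤ max (Real.sqrt (bE ν 1)) (2 * |bJc ν 0|) + 1 := by
          have := le_max_left (Real.sqrt (bE ν 1)) (2 * |bJc ν 0|)
          linarith


lemma bJc_def (ν : ℝ) (n : ℕ) :
    bJc ν n = (-(1:ℝ)/4) ^ n / ((n.factorial : ℝ) * Real.Gamma (ν + n + 1)) := rfl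

lemma besselJ_eq_bJf (ν r : ℝ) : besselJ ν r = (r/2) ^ ν * bJf ν (r^2) := by
  unfold besselJ bJf
  congr 1
  apply tsum_congr
  intro n
  rw [bJc_def, show (-(r^2/4)) = (-1/4 : ℝ) * r^2 by ring, mul_pow]
  ring

lemma sqrt_besselJ_le (hν : -(1/2 : ℝ) ≤ ν) (hν2 : ν ≤ 1/2) :
    ∃ M : ℝ, 0 < M ∧ ∀ r : ℝ, 0 < r → Real.sqrt r * |besselJ ν r| ≤ M := by
  obtain ⟨M, hM, hMb⟩ := bG_bounded hν hν2
  refine ⟨2 * M, by positivity, ?_⟩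
  intro r hr
  have heq : Real.sqrt r * |besselJ ν r| = |bG ν r| / 2 ^ ν := by
    rw [besselJ_eq_bJf, abs_mul,
      abs_of_pos (Real.rpow_pos_of_pos (by positivity : (0:ℝ) < r/2) ν)]
    unfold bG
    rw [abs_mul, abs_of_pos (Real.rpow_pos_of_pos hr _)]
    rw [Real.div_rpow hr.le (by norm_num : (0:ℝ) ≤ 2)]
    rw [Real.sqrt_eq_rpow]
    rw [show ν + 1/2 = 1/2 + ν by ring, Real.rpow_add hr]
    ring
  rw [heq]
  have h2ν : (1:ℝ)/2 ≤ 2 ^ ν := by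
    have := Real.rpow_le_rpow_of_exponent_le (by norm_num : (1:ℝ) ≤ 2) (by linarith : (-1:ℝ) ≤ ν)
    rwa [Real.rpow_neg_one, show ((2:ℝ))⁻¹ = 1/2 by norm_num] at this
  calc |bG ν r| / 2 ^ ν ≤ M / (1/2) := div_le_div₀ hM.le (hMb r hr) (by norm_num) h2ν
    _ = 2 * M := by ring

end BesselAux

/-- For `l ∈ (−1/2, 0]` there is `C > 0` (depending only on `l`) such that for all
`x, y, t > 0` one has `(√(xy)/(2t)) |J_{−l−1/2}(xy/(2t))| ≤ C t^{−1/2}`. -/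
theorem dispersive_estimate_pi_half_nonpos (l : ℝ) (hl : l ∈ Set.Ioc (-(1/2) : ℝ) 0) :
    ∃ C : ℝ, 0 < C ∧ ∀ x y t : ℝ, 0 < x → 0 < y → 0 < t →
      Real.sqrt (x * y) / (2 * t) * |besselJ (-l - 1/2) (x * y / (2 * t))| ≤
        C * t ^ (-(1/2) : ℝ) := by
  obtain ⟨hl1, hl2⟩ := hl
  have hν : -(1/2 : ℝ) ≤ -l - 1/2 := by linarith
  have hν2 : -l - 1/2 ≤ 1/2 := by linarith
  obtain ⟨M, hM, hMb⟩ := sqrt_besselJ_le hν hν2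
  refine ⟨M, hM, ?_⟩
  intro x y t hx hy ht
  set r := x * y / (2 * t) with hrdef
  have hr : 0 < r := by positivity
  have h2t : (0:ℝ) < 2 * t := by linarith
  have hxy : x * y = 2 * t * r := by
    rw [hrdef]; field_simp
  have hsplit : Real.sqrt (x * y) = Real.sqrt (2 * t) * Real.sqrt r := by
    rw [hxy, Real.sqrt_mul h2t.le]
  have hs0 : 0 < Real.sqrt (2 * t) := Real.sqrt_pos.mpr h2t
  have hst : Real.sqrt (2 * t) / (2 * t) = (Real.sqrt (2 * t))⁻¹ := by
    rw [show (2:ℝ) * t = Real.sqrt (2*t) * Real.sqrt (2*t) from (Real.mul_self_sqrt h2t.le).symm]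
    field_simp
    rw [Real.sqrt_sq hs0.le]
  have hfinal : Real.sqrt (x*y) / (2*t) * |besselJ (-l-1/2) r|
      = (Real.sqrt r * |besselJ (-l-1/2) r|) * (Real.sqrt (2*t))⁻¹ := by
    rw [hsplit, ← hst]; ring
  rw [hfinal]
  have h1 : (Real.sqrt (2*t))⁻¹ ≤ (Real.sqrt t)⁻¹ := by
    apply inv_anti₀ (Real.sqrt_pos.mpr ht)
    exact Real.sqrt_le_sqrt (by linarith)
  have h2 : t ^ (-(1/2) : ℝ) = (Real.sqrt t)⁻¹ := by
    rw [Real.rpow_neg ht.le, Real.sqrt_eq_rpow]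
  rw [h2]
  exact mul_le_mul (hMb r hr) h1 (by positivity) hM.le
end

section
/- Let l ∈ (−1/2, 1/2). There exists a constant C > 0 depending only on l such that for all k > 0, |√k · J_{−l−1/2}(k)| ≤ C · ((1 + k)/k)^l. -/
open MeasureTheory Real Filter Set

open Topology FormalMultilinearSeries

namespace BesselAux

noncomputable def ba (ν : ℝ) (n : ℕ) : ℝ :=
  (-1/4) ^ n / ((n.factorial : ℝ) * Real.Gamma (ν + n + 1))

noncomputable def Dc (c : ℕ → ℝ) (n : ℕ) : ℝ := ((n : ℝ) + 1) * c (n + 1)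

lemma gamma_pos (ν : ℝ) (hν : -1 < ν) (n : ℕ) : 0 < Real.Gamma (ν + n + 1) :=
  Real.Gamma_pos_of_pos (by have : (0:ℝ) ≤ n := n.cast_nonneg; linarith)

lemma ba_ne (ν : ℝ) (hν : -1 < ν) (n : ℕ) : ba ν n ≠ 0 := by
  have h1 : ((-1:ℝ)/4) ^ n ≠ 0 := pow_ne_zero _ (by norm_num)
  have hg := gamma_pos ν hν n
  have hf : (0:ℝ) < n.factorial := by exact_mod_cast n.factorial_pos
  exact div_ne_zero h1 (by positivity)

lemma ba_rec (ν : ℝ) (hν : -1 < ν) (n : ℕ) :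
    ((n : ℝ) + 1) * (ν + n + 1) * ba ν (n + 1) = (-1/4) * ba ν n := by
  have hz : ν + (n:ℝ) + 1 ≠ 0 := by have : (0:ℝ) ≤ n := n.cast_nonneg; intro h; linarith [h.le]
  have hg : Real.Gamma (ν + (n+1 : ℕ) + 1) = (ν + n + 1) * Real.Gamma (ν + n + 1) := by
    have h : ν + ((n:ℝ)+1) + 1 = (ν + n + 1) + 1 := by ring
    push_cast
    rw [h, Real.Gamma_add_one hz]
  have hgp := gamma_pos ν hν n
  have hf : (0:ℝ) < n.factorial := by exact_mod_cast n.factorial_pos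
  unfold ba
  rw [hg]
  push_cast [Nat.factorial_succ]
  field_simp
  ring

lemma abs_ba_succ_div (ν : ℝ) (hν : -1 < ν) (n : ℕ) :
    ‖ba ν (n+1)‖ / ‖ba ν n‖ = (1/4) / (((n:ℝ)+1) * (ν + n + 1)) := by
  have hgp := gamma_pos ν hν n
  have hb := ba_ne ν hν n
  have hrec := ba_rec ν hν n
  have hpos : (0:ℝ) < ((n:ℝ)+1) * (ν + n + 1) := by
    have : (0:ℝ) ≤ n := n.cast_nonneg
    nlinarith
  have hba1 : ba ν (n+1) = (-1/4) * ba ν n / (((n:ℝ)+1) * (ν + n + 1)) := by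
    rw [eq_div_iff hpos.ne', ← hrec]; ring
  have habs : |ba ν n| ≠ 0 := abs_ne_zero.mpr hb
  rw [hba1, Real.norm_eq_abs, Real.norm_eq_abs, abs_div, abs_mul, abs_of_pos hpos,
    (by norm_num : |(-1/4 : ℝ)| = 1/4)]
  field_simp

lemma ratio_ba (ν : ℝ) (hν : -1 < ν) :
    Tendsto (fun n ↦ ‖ba ν (n+1)‖ / ‖ba ν n‖) atTop (𝓝 0) := by
  simp only [abs_ba_succ_div ν hν]
  refine Tendsto.div_atTop tendsto_const_nhds ?_
  refine Tendsto.atTop_mul_atTop₀ ?_ ?_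
  · exact tendsto_atTop_add_const_right _ 1 tendsto_natCast_atTop_atTop
  · have := tendsto_atTop_add_const_right atTop (ν + 1) (tendsto_natCast_atTop_atTop (R := ℝ))
    refine this.congr fun n ↦ by ring

lemma ratio_Dc (c : ℕ → ℝ) (hc : ∀ n, c n ≠ 0)
    (h : Tendsto (fun n ↦ ‖c (n+1)‖ / ‖c n‖) atTop (𝓝 0)) :
    Tendsto (fun n ↦ ‖Dc c (n+1)‖ / ‖Dc c n‖) atTop (𝓝 0) := by
  have key : ∀ n : ℕ, ‖Dc c (n+1)‖ / ‖Dc c n‖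
      = (((n:ℝ)+2) / ((n:ℝ)+1)) * (‖c (n+2)‖ / ‖c (n+1)‖) := by
    intro n
    have h1 : (0:ℝ) < (n:ℝ) + 1 := by positivity
    have h2 : (0:ℝ) < (n:ℝ) + 2 := by positivity
    unfold Dc
    push_cast
    rw [norm_mul, norm_mul, Real.norm_eq_abs ((n:ℝ)+1+1), Real.norm_eq_abs ((n:ℝ)+1),
      abs_of_pos (by linarith), abs_of_pos h1]
    rw [show (n:ℝ) + 1 + 1 = (n:ℝ) + 2 by ring]
    field_simp
  simp only [key]
  have h2 : Tendsto (fun n : ℕ ↦ ((n:ℝ)+2) / ((n:ℝ)+1)) atTop (𝓝 1) := by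
    have : ∀ n : ℕ, ((n:ℝ)+2) / ((n:ℝ)+1) = 1 + 1 / ((n:ℝ)+1) := by
      intro n
      have h1 : (0:ℝ) < (n:ℝ) + 1 := by positivity
      field_simp
      ring
    simp only [this]
    have := tendsto_one_div_add_atTop_nhds_zero_nat (𝕜 := ℝ)
    simpa using tendsto_const_nhds.add this
  have h3 : Tendsto (fun n : ℕ ↦ ‖c (n+2)‖ / ‖c (n+1)‖) atTop (𝓝 0) := by
    have := h.comp (tendsto_add_atTop_nat 1)
    simpa [Function.comp_def] using this
  simpa using h2.mul h3

lemma Dc_ne (c : ℕ → ℝ) (hc : ∀ n, c n ≠ 0) (n : ℕ) : Dc c n ≠ 0 := by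
  unfold Dc
  have : ((n:ℝ)+1) ≠ 0 := by positivity
  exact mul_ne_zero this (hc _)

lemma radius_top (c : ℕ → ℝ) (hc : ∀ n, c n ≠ 0)
    (h : Tendsto (fun n ↦ ‖c (n+1)‖ / ‖c n‖) atTop (𝓝 0)) :
    (ofScalars ℝ c).radius = ⊤ :=
  ofScalars_radius_eq_top_of_tendsto ℝ c (Eventually.of_forall hc) h


lemma hasSum_sum (c : ℕ → ℝ) (hc : (ofScalars ℝ c).radius = ⊤) (x : ℝ) :
    HasSum (fun n ↦ c n * x ^ n) (ofScalarsSum c x) := by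
  have hx : x ∈ EMetric.ball (0:ℝ) (ofScalars ℝ c).radius := by
    rw [hc]; exact EMetric.mem_ball.mpr (edist_lt_top x 0)
  have := (ofScalars ℝ c).hasSum hx
  refine this.congr_fun fun n ↦ ?_
  rw [ofScalars_apply_eq, smul_eq_mul]

lemma hasFPS (c : ℕ → ℝ) (hc : (ofScalars ℝ c).radius = ⊤) :
    HasFPowerSeriesOnBall (ofScalarsSum c) (ofScalars ℝ c) 0 ⊤ := by
  have := (ofScalars ℝ c).hasFPowerSeriesOnBall (by rw [hc]; exact ENNReal.zero_lt_top)
  rwa [hc] at this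

lemma hasDerivAt_sum (c : ℕ → ℝ) (hc : (ofScalars ℝ c).radius = ⊤)
    (hc2 : (ofScalars ℝ (Dc c)).radius = ⊤) {x : ℝ} (hx : x ≠ 0) :
    HasDerivAt (ofScalarsSum c) (ofScalarsSum (Dc c) x) x := by
  have hp := hasFPS c hc
  have hd := hp.fderiv
  have hmem : x ∈ EMetric.ball (0:ℝ) ⊤ := EMetric.mem_ball.mpr (edist_lt_top x 0)
  have hsum := hd.hasSum hmem
  rw [zero_add] at hsum
  have hsum2 := hsum.mapL (ContinuousLinearMap.apply ℝ ℝ x)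
  have hterm : ∀ n : ℕ, (ContinuousLinearMap.apply ℝ ℝ x)
      ((ofScalars ℝ c).derivSeries n fun _ ↦ x) = x * (Dc c n * x ^ n) := by
    intro n
    have := (ofScalars ℝ c).derivSeries_apply_diag n x
    simp only [ContinuousLinearMap.apply_apply]
    rw [this, ofScalars_apply_eq, nsmul_eq_mul]
    unfold Dc
    push_cast
    rw [smul_eq_mul, pow_succ]
    ring
  rw [funext hterm] at hsum2
  have hsum3 : HasSum (fun n ↦ Dc c n * x ^ n)
      (x⁻¹ * ((fderiv ℝ (ofScalarsSum c) x) x)) := by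
    have := hsum2.mul_left x⁻¹
    refine this.congr_fun fun n ↦ ?_
    rw [← mul_assoc, inv_mul_cancel₀ hx, one_mul]
  have heq : ofScalarsSum (Dc c) x = x⁻¹ * ((fderiv ℝ (ofScalarsSum c) x) x) :=
    (hasSum_sum (Dc c) hc2 x).unique hsum3
  have hdiff : DifferentiableAt ℝ (ofScalarsSum c) x := by
    have h1 := hp.differentiableOn
    exact (h1 x hmem).differentiableAt (EMetric.isOpen_ball.mem_nhds hmem)
  have := hdiff.hasDerivAt
  have hde : deriv (ofScalarsSum c) x = ofScalarsSum (Dc c) x := by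
    rw [heq, ← fderiv_apply_one_eq_deriv]
    have : (fderiv ℝ (ofScalarsSum c) x) x = x * (fderiv ℝ (ofScalarsSum c) x) 1 := by
      calc (fderiv ℝ (ofScalarsSum c) x) x = (fderiv ℝ (ofScalarsSum c) x) (x • 1) := by
            rw [smul_eq_mul, mul_one]
        _ = x • (fderiv ℝ (ofScalarsSum c) x) 1 := (fderiv ℝ (ofScalarsSum c) x).map_smul x 1
        _ = x * (fderiv ℝ (ofScalarsSum c) x) 1 := by rw [smul_eq_mul]
    rw [this, ← mul_assoc, inv_mul_cancel₀ hx, one_mul]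
  rwa [hde] at this

lemma continuous_sum (c : ℕ → ℝ) (hc : (ofScalars ℝ c).radius = ⊤) :
    Continuous (ofScalarsSum (E := ℝ) c) := by
  have := (hasFPS c hc).continuousOn
  rw [← continuousOn_univ]
  have huniv : Metric.eball (0:ℝ) ⊤ = Set.univ := by
    ext y; simp [EMetric.mem_ball, edist_lt_top]
  rwa [huniv] at this


section Nu
variable (ν : ℝ) (hν : -1 < ν)

noncomputable def Sf : ℝ → ℝ := ofScalarsSum (E := ℝ) (ba ν)
noncomputable def Tf : ℝ → ℝ := ofScalarsSum (E := ℝ) (Dc (ba ν))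
noncomputable def Uf : ℝ → ℝ := ofScalarsSum (E := ℝ) (Dc (Dc (ba ν)))

include hν

lemma rad1 : (ofScalars ℝ (ba ν)).radius = ⊤ :=
  radius_top _ (ba_ne ν hν) (ratio_ba ν hν)

lemma rad2 : (ofScalars ℝ (Dc (ba ν))).radius = ⊤ :=
  radius_top _ (Dc_ne _ (ba_ne ν hν)) (ratio_Dc _ (ba_ne ν hν) (ratio_ba ν hν))

lemma rad3 : (ofScalars ℝ (Dc (Dc (ba ν)))).radius = ⊤ :=
  radius_top _ (Dc_ne _ (Dc_ne _ (ba_ne ν hν)))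
    (ratio_Dc _ (Dc_ne _ (ba_ne ν hν)) (ratio_Dc _ (ba_ne ν hν) (ratio_ba ν hν)))

lemma hasDerivAt_Sf {x : ℝ} (hx : x ≠ 0) : HasDerivAt (Sf ν) (Tf ν x) x :=
  hasDerivAt_sum _ (rad1 ν hν) (rad2 ν hν) hx

lemma hasDerivAt_Tf {x : ℝ} (hx : x ≠ 0) : HasDerivAt (Tf ν) (Uf ν x) x :=
  hasDerivAt_sum _ (rad2 ν hν) (rad3 ν hν) hx

lemma ode (x : ℝ) : 4 * x * Uf ν x + 4 * (ν + 1) * Tf ν x + Sf ν x = 0 := by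
  set a := ba ν with ha
  have hS := hasSum_sum a (rad1 ν hν) x
  have hT := hasSum_sum (Dc a) (rad2 ν hν) x
  have hU := hasSum_sum (Dc (Dc a)) (rad3 ν hν) x
  set f : ℕ → ℝ := fun n ↦ 4 * n * ((n:ℝ) + 1) * a (n + 1) * x ^ n with hf
  have h1 : HasSum (fun n ↦ f (n + 1)) (4 * x * Uf ν x) := by
    refine ((hU.mul_left (4 * x)).congr_fun fun n ↦ ?_)
    simp only [hf, Dc]
    push_cast
    rw [pow_succ]
    ring
  have h2 : HasSum f (4 * x * Uf ν x) := by
    have := (hasSum_nat_add_iff (f := f) 1).mp h1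
    simpa [hf] using this
  have h3 : HasSum (fun n ↦ f n + 4 * (ν + 1) * (Dc a n * x ^ n))
      (4 * x * Uf ν x + 4 * (ν + 1) * Tf ν x) := h2.add (hT.mul_left _)
  have h4 : HasSum (fun n ↦ -(a n * x ^ n)) (-(Sf ν x)) := hS.neg
  have hterm : ∀ n : ℕ, f n + 4 * (ν + 1) * (Dc a n * x ^ n) = -(a n * x ^ n) := by
    intro n
    have hrec := ba_rec ν hν n
    simp only [hf, Dc, ← ha]
    have : (4 * (n:ℝ) * ((n:ℝ)+1) + 4 * (ν+1) * ((n:ℝ)+1)) * a (n+1)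
        = 4 * (((n:ℝ)+1) * (ν + n + 1) * a (n+1)) := by ring
    calc 4 * (n:ℝ) * ((n:ℝ)+1) * a (n+1) * x ^ n + 4 * (ν+1) * (((n:ℝ)+1) * a (n+1) * x ^ n)
        = (4 * (((n:ℝ)+1) * (ν + n + 1) * a (n+1))) * x ^ n := by ring
      _ = (4 * ((-1/4) * a n)) * x ^ n := by rw [hrec]
      _ = -(a n * x ^ n) := by ring
  have h5 : HasSum (fun n ↦ -(a n * x ^ n)) (4 * x * Uf ν x + 4 * (ν + 1) * Tf ν x) :=
    h3.congr_fun fun n ↦ (hterm n).symm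
  have := h5.unique h4
  linarith [this]


noncomputable def wf (k : ℝ) : ℝ := k ^ (ν + 1/2) * Sf ν (k ^ 2)

noncomputable def w1f (k : ℝ) : ℝ :=
  (ν + 1/2) * (k ^ (ν - 1/2) * Sf ν (k ^ 2)) + 2 * (k ^ (ν + 3/2) * Tf ν (k ^ 2))

lemma hasDerivAt_wf {k : ℝ} (hk : 0 < k) : HasDerivAt (wf ν) (w1f ν k) k := by
  have hk2 : (k ^ 2 : ℝ) ≠ 0 := by positivity
  have hsq : HasDerivAt (fun t : ℝ ↦ t ^ 2) (2 * k) k := by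
    simpa using hasDerivAt_pow 2 k
  have hScomp : HasDerivAt (fun t ↦ Sf ν (t ^ 2)) (Tf ν (k ^ 2) * (2 * k)) k :=
    by
      have h2 : HasDerivAt (Sf ν) (Tf ν (k ^ 2)) ((fun t : ℝ ↦ t ^ 2) k) :=
        hasDerivAt_Sf ν hν hk2
      exact h2.comp (h := fun t : ℝ ↦ t ^ 2) k hsq
  have hrp : HasDerivAt (fun t : ℝ ↦ t ^ (ν + 1/2)) ((ν + 1/2) * k ^ (ν + 1/2 - 1)) k :=
    Real.hasDerivAt_rpow_const (Or.inl hk.ne')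
  have h := hrp.mul hScomp
  refine h.congr_deriv ?_
  symm
  unfold w1f
  rw [show ν + 1/2 - 1 = ν - 1/2 by ring,
    show ν + 3/2 = ν + 1/2 + 1 by ring, Real.rpow_add_one hk.ne']
  ring

lemma hasDerivAt_w1f {k : ℝ} (hk : 0 < k) :
    HasDerivAt (w1f ν) (-(1 + (1/4 - ν ^ 2) / k ^ 2) * wf ν k) k := by
  have hk2 : (k ^ 2 : ℝ) ≠ 0 := by positivity
  have hsq : HasDerivAt (fun t : ℝ ↦ t ^ 2) (2 * k) k := by
    simpa using hasDerivAt_pow 2 k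
  have hScomp : HasDerivAt (fun t ↦ Sf ν (t ^ 2)) (Tf ν (k ^ 2) * (2 * k)) k :=
    by
      have h2 : HasDerivAt (Sf ν) (Tf ν (k ^ 2)) ((fun t : ℝ ↦ t ^ 2) k) :=
        hasDerivAt_Sf ν hν hk2
      exact h2.comp (h := fun t : ℝ ↦ t ^ 2) k hsq
  have hTcomp : HasDerivAt (fun t ↦ Tf ν (t ^ 2)) (Uf ν (k ^ 2) * (2 * k)) k :=
    by
      have h2 : HasDerivAt (Tf ν) (Uf ν (k ^ 2)) ((fun t : ℝ ↦ t ^ 2) k) :=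
        hasDerivAt_Tf ν hν hk2
      exact h2.comp (h := fun t : ℝ ↦ t ^ 2) k hsq
  have hrp1 : HasDerivAt (fun t : ℝ ↦ t ^ (ν - 1/2)) ((ν - 1/2) * k ^ (ν - 1/2 - 1)) k :=
    Real.hasDerivAt_rpow_const (Or.inl hk.ne')
  have hrp2 : HasDerivAt (fun t : ℝ ↦ t ^ (ν + 3/2)) ((ν + 3/2) * k ^ (ν + 3/2 - 1)) k :=
    Real.hasDerivAt_rpow_const (Or.inl hk.ne')
  have h := ((hrp1.mul hScomp).const_mul (ν + 1/2)).add ((hrp2.mul hTcomp).const_mul 2)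
  refine h.congr_deriv ?_
  symm
  have hode := ode ν hν (k ^ 2)
  unfold wf
  have e1 : k ^ (ν - 1/2 - 1) = k ^ (ν - 3/2) := by rw [show ν - 1/2 - 1 = ν - 3/2 by ring]
  have e2 : k ^ (ν - 1/2) = k ^ (ν - 3/2) * k := by
    rw [show ν - 1/2 = ν - 3/2 + 1 by ring, Real.rpow_add_one hk.ne']
  have e3 : k ^ (ν + 1/2) = k ^ (ν - 3/2) * k * k := by
    rw [show ν + 1/2 = ν - 3/2 + 1 + 1 by ring, Real.rpow_add_one hk.ne',
      Real.rpow_add_one hk.ne']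
  have e4 : k ^ (ν + 3/2) = k ^ (ν - 3/2) * k * k * k := by
    rw [show ν + 3/2 = ν + 1/2 + 1 by ring, Real.rpow_add_one hk.ne', e3]
  have e5 : k ^ (ν + 3/2 - 1) = k ^ (ν - 3/2) * k * k := by
    rw [show ν + 3/2 - 1 = ν + 1/2 by ring, e3]
  rw [e1, e2, e3, e4, e5]
  set A := k ^ (ν - 3/2)
  set S := Sf ν (k ^ 2)
  set T := Tf ν (k ^ 2)
  set U := Uf ν (k ^ 2)
  field_simp
  linear_combination (-16 * A * k ^ 2) * hode


noncomputable def Ef (k : ℝ) : ℝ := wf ν k ^ 2 + w1f ν k ^ 2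

noncomputable def Gf (k : ℝ) : ℝ := Ef ν k * Real.exp (|1/4 - ν ^ 2| / k)

lemma hasDerivAt_Ef {k : ℝ} (hk : 0 < k) :
    HasDerivAt (Ef ν) (2 * wf ν k * w1f ν k
      + 2 * w1f ν k * (-(1 + (1/4 - ν ^ 2) / k ^ 2) * wf ν k)) k := by
  have h1 := ((hasDerivAt_wf ν hν hk).pow 2).add ((hasDerivAt_w1f ν hν hk).pow 2)
  refine h1.congr_deriv ?_
  push_cast
  ring

lemma hasDerivAt_Gf {k : ℝ} (hk : 0 < k) :
    HasDerivAt (Gf ν)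
      ((2 * wf ν k * w1f ν k + 2 * w1f ν k * (-(1 + (1/4 - ν ^ 2) / k ^ 2) * wf ν k))
          * Real.exp (|1/4 - ν ^ 2| / k)
        + Ef ν k * (Real.exp (|1/4 - ν ^ 2| / k) * (|1/4 - ν ^ 2| * -(k ^ 2)⁻¹))) k := by
  have hinv : HasDerivAt (fun t : ℝ ↦ |1/4 - ν ^ 2| * t⁻¹)
      (|1/4 - ν ^ 2| * -(k ^ 2)⁻¹) k := (hasDerivAt_inv hk.ne').const_mul _
  have hexp : HasDerivAt (fun t : ℝ ↦ Real.exp (|1/4 - ν ^ 2| * t⁻¹))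
      (Real.exp (|1/4 - ν ^ 2| * k⁻¹) * (|1/4 - ν ^ 2| * -(k ^ 2)⁻¹)) k := hinv.exp
  have h := (hasDerivAt_Ef ν hν hk).mul hexp
  unfold Gf
  simp only [div_eq_mul_inv] at h ⊢
  exact h

lemma deriv_Gf_nonpos {k : ℝ} (hk : 0 < k) :
    (2 * wf ν k * w1f ν k + 2 * w1f ν k * (-(1 + (1/4 - ν ^ 2) / k ^ 2) * wf ν k))
          * Real.exp (|1/4 - ν ^ 2| / k)
        + Ef ν k * (Real.exp (|1/4 - ν ^ 2| / k) * (|1/4 - ν ^ 2| * -(k ^ 2)⁻¹)) ≤ 0 := by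
  set w := wf ν k
  set w1 := w1f ν k
  set c := 1/4 - ν ^ 2 with hc
  have hE : Ef ν k = w ^ 2 + w1 ^ 2 := rfl
  rw [hE]
  have hexp : 0 < Real.exp (|c| / k) := Real.exp_pos _
  have hP : (0:ℝ) < (k ^ 2)⁻¹ := by positivity
  have h1 : 0 ≤ (|c| + c) * (w + w1) ^ 2 :=
    mul_nonneg (by linarith [neg_abs_le c]) (sq_nonneg _)
  have h2 : 0 ≤ (|c| - c) * (w - w1) ^ 2 :=
    mul_nonneg (by linarith [le_abs_self c]) (sq_nonneg _)
  have key : 2 * w * w1 + 2 * w1 * (-(1 + c / k ^ 2) * w)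
      + (w ^ 2 + w1 ^ 2) * (|c| * -(k ^ 2)⁻¹) ≤ 0 := by
    have hdiv : c / k ^ 2 = c * (k ^ 2)⁻¹ := div_eq_mul_inv ..
    rw [hdiv]
    nlinarith [mul_nonneg hP.le h1, mul_nonneg hP.le h2]
  calc (2 * w * w1 + 2 * w1 * (-(1 + c / k ^ 2) * w)) * Real.exp (|c| / k)
        + (w ^ 2 + w1 ^ 2) * (Real.exp (|c| / k) * (|c| * -(k ^ 2)⁻¹))
      = (2 * w * w1 + 2 * w1 * (-(1 + c / k ^ 2) * w)
        + (w ^ 2 + w1 ^ 2) * (|c| * -(k ^ 2)⁻¹)) * Real.exp (|c| / k) := by ring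
    _ ≤ 0 * Real.exp (|c| / k) := by
        exact mul_le_mul_of_nonneg_right key hexp.le
    _ = 0 := zero_mul _

lemma Gf_anti : AntitoneOn (Gf ν) (Ici (1:ℝ)) := by
  refine antitoneOn_of_deriv_nonpos (convex_Ici 1) ?_ ?_ ?_
  · intro x hx
    have hx0 : (0:ℝ) < x := lt_of_lt_of_le one_pos hx
    exact (hasDerivAt_Gf ν hν hx0).continuousAt.continuousWithinAt
  · intro x hx
    rw [interior_Ici] at hx
    have hx0 : (0:ℝ) < x := lt_trans one_pos hx
    exact (hasDerivAt_Gf ν hν hx0).differentiableAt.differentiableWithinAt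
  · intro x hx
    rw [interior_Ici] at hx
    have hx0 : (0:ℝ) < x := lt_trans one_pos hx
    rw [(hasDerivAt_Gf ν hν hx0).deriv]
    exact deriv_Gf_nonpos ν hν hx0

lemma wf_sq_le {k : ℝ} (hk : 1 ≤ k) :
    wf ν k ^ 2 ≤ Ef ν 1 * Real.exp (|1/4 - ν ^ 2|) := by
  have hk0 : (0:ℝ) < k := lt_of_lt_of_le one_pos hk
  have h1 : Gf ν k ≤ Gf ν 1 := Gf_anti ν hν (self_mem_Ici) hk hk
  have hEnn : 0 ≤ Ef ν k := by
    have : Ef ν k = wf ν k ^ 2 + w1f ν k ^ 2 := rfl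
    rw [this]; positivity
  have hexp1 : 1 ≤ Real.exp (|1/4 - ν ^ 2| / k) :=
    Real.one_le_exp (by positivity)
  have hEk : Ef ν k ≤ Gf ν k := by
    have := mul_le_mul_of_nonneg_left hexp1 hEnn
    simpa [Gf] using this
  have hG1 : Gf ν 1 = Ef ν 1 * Real.exp (|1/4 - ν ^ 2|) := by
    simp [Gf]
  have hwE : wf ν k ^ 2 ≤ Ef ν k := by
    have : Ef ν k = wf ν k ^ 2 + w1f ν k ^ 2 := rfl
    nlinarith [sq_nonneg (w1f ν k)]
  linarith

end Nu

lemma besselJ_eq {ν : ℝ} (hν : -1 < ν) {k : ℝ} (hk : 0 < k) :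
    Real.sqrt k * besselJ ν k = (2:ℝ) ^ (-ν) * wf ν k := by
  have htsum : ∑' n : ℕ, (-(k ^ 2 / 4)) ^ n / ((n.factorial : ℝ) * Real.Gamma (ν + n + 1))
      = Sf ν (k ^ 2) := by
    have h := hasSum_sum (ba ν) (rad1 ν hν) (k ^ 2)
    unfold Sf
    rw [← h.tsum_eq]
    refine tsum_congr fun n ↦ ?_
    unfold ba
    rw [div_mul_eq_mul_div, ← mul_pow, show (-1/4 : ℝ) * k ^ 2 = -(k ^ 2 / 4) by ring]
  unfold besselJ wf
  rw [htsum, Real.sqrt_eq_rpow, Real.div_rpow hk.le (by norm_num : (0:ℝ) ≤ 2),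
    Real.rpow_neg (by norm_num : (0:ℝ) ≤ 2)]
  have h4 : k ^ ((1:ℝ)/2) * k ^ ν = k ^ (ν + 1/2) := by
    rw [← Real.rpow_add hk]; ring_nf
  calc k ^ ((1:ℝ)/2) * (k ^ ν / 2 ^ ν * Sf ν (k ^ 2))
      = (k ^ ((1:ℝ)/2) * k ^ ν) * Sf ν (k ^ 2) / 2 ^ ν := by ring
    _ = ((2:ℝ) ^ ν)⁻¹ * (k ^ (ν + 1/2) * Sf ν (k ^ 2)) := by rw [h4]; ring

end BesselAux

open BesselAux in
/-- For `l ∈ (−1/2, 1/2)` there is `C > 0` (depending only on `l`) such that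
`|√k J_{−l−1/2}(k)| ≤ C ((1+k)/k)^l` for all `k > 0`. -/
theorem sqrt_mul_besselJ_bound (l : ℝ) (hl : l ∈ Set.Ioo (-(1/2) : ℝ) (1/2)) :
    ∃ C : ℝ, 0 < C ∧ ∀ k : ℝ, 0 < k →
      |Real.sqrt k * besselJ (-l - 1/2) k| ≤ C * ((1 + k) / k) ^ l := by
  obtain ⟨hl1, hl2⟩ := hl
  set ν : ℝ := -l - 1/2 with hνdef
  have hν : -1 < ν := by rw [hνdef]; linarith
  have hνl : ν + 1/2 = -l := by rw [hνdef]; ring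
  obtain ⟨M, hM⟩ := (isCompact_Icc (a := (0:ℝ)) (b := 1)).exists_bound_of_continuousOn
    ((continuous_sum (ba ν) (rad1 ν hν)).continuousOn)
  have hM0 : 0 ≤ M := le_trans (norm_nonneg _) (hM 0 (by constructor <;> norm_num))
  set B : ℝ := Ef ν 1 * Real.exp (|1/4 - ν ^ 2|) with hBdef
  have h2ν : (0:ℝ) < (2:ℝ) ^ (-ν) := Real.rpow_pos_of_pos (by norm_num) _
  set C0 : ℝ := max (Real.sqrt B) M * (2:ℝ) ^ (-ν) + 1 with hC0def
  have hC0 : 1 ≤ C0 := by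
    have h1 : 0 ≤ max (Real.sqrt B) M := le_trans (Real.sqrt_nonneg B) (le_max_left _ _)
    nlinarith
  have h2labs : (0:ℝ) < (2:ℝ) ^ |l| := Real.rpow_pos_of_pos (by norm_num) _
  refine ⟨(2:ℝ) ^ |l| * C0, by positivity, fun k hk ↦ ?_⟩
  have hJw : |Real.sqrt k * besselJ ν k| = (2:ℝ) ^ (-ν) * |wf ν k| := by
    rw [besselJ_eq hν hk, abs_mul, abs_of_pos h2ν]
  have hbase : (0:ℝ) < (1 + k) / k := by positivity
  have h2inv : (2:ℝ) ^ |l| * (2:ℝ) ^ (-|l|) = 1 := by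
    rw [← Real.rpow_add (by norm_num : (0:ℝ) < 2)]
    simp
  rcases le_or_gt 1 k with hk1 | hk1
  · -- large k
    have hw : |wf ν k| ≤ Real.sqrt B := by
      rw [← Real.sqrt_sq_eq_abs]
      exact Real.sqrt_le_sqrt (wf_sq_le ν hν hk1)
    have hLHS : |Real.sqrt k * besselJ ν k| ≤ C0 := by
      rw [hJw]
      calc (2:ℝ) ^ (-ν) * |wf ν k| ≤ (2:ℝ) ^ (-ν) * Real.sqrt B :=
            mul_le_mul_of_nonneg_left hw h2ν.le
        _ ≤ max (Real.sqrt B) M * (2:ℝ) ^ (-ν) := by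
            rw [mul_comm]
            exact mul_le_mul_of_nonneg_right (le_max_left _ _) h2ν.le
        _ ≤ C0 := by rw [hC0def]; linarith
    have hbl : (2:ℝ) ^ (-|l|) ≤ ((1 + k) / k) ^ l := by
      have hb2 : (1 + k) / k ≤ 2 := by
        rw [div_le_iff₀ hk]; linarith
      have hb1 : (1:ℝ) ≤ (1 + k) / k := by
        rw [le_div_iff₀ hk]; linarith
      rcases le_or_gt 0 l with hl0 | hl0
      · have e1 : (2:ℝ) ^ (-|l|) ≤ 1 :=
          Real.rpow_le_one_of_one_le_of_nonpos (by norm_num) (neg_nonpos.mpr (abs_nonneg l))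
        have e2 : (1:ℝ) ≤ ((1 + k) / k) ^ l := by
          calc (1:ℝ) = (1:ℝ) ^ l := (Real.one_rpow l).symm
            _ ≤ ((1 + k) / k) ^ l := Real.rpow_le_rpow (by norm_num) hb1 hl0
        linarith
      · rw [show -|l| = l by rw [abs_of_neg hl0]; ring]
        exact Real.rpow_le_rpow_of_nonpos hbase hb2 hl0.le
    calc |Real.sqrt k * besselJ ν k| ≤ C0 := hLHS
      _ = (2:ℝ) ^ |l| * C0 * (2:ℝ) ^ (-|l|) := by
          rw [mul_assoc, mul_comm C0, ← mul_assoc, h2inv, one_mul]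
      _ ≤ (2:ℝ) ^ |l| * C0 * ((1 + k) / k) ^ l :=
          mul_le_mul_of_nonneg_left hbl (by positivity)
  · -- small k
    have hksq : k ^ 2 ∈ Set.Icc (0:ℝ) 1 := by
      constructor
      · positivity
      · nlinarith
    have hrp : (0:ℝ) < k ^ (ν + 1/2) := Real.rpow_pos_of_pos hk _
    have hw : |wf ν k| ≤ k ^ (ν + 1/2) * M := by
      have habs : |wf ν k| = k ^ (ν + 1/2) * |Sf ν (k ^ 2)| := by
        unfold wf
        rw [abs_mul, abs_of_pos hrp]
      rw [habs]
      exact mul_le_mul_of_nonneg_left (by simpa [Real.norm_eq_abs, Sf] using hM _ hksq) hrp.le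
    have hkl : (0:ℝ) < k ^ (-l) := Real.rpow_pos_of_pos hk _
    have hLHS : |Real.sqrt k * besselJ ν k| ≤ C0 * k ^ (-l) := by
      rw [hJw]
      calc (2:ℝ) ^ (-ν) * |wf ν k| ≤ (2:ℝ) ^ (-ν) * (k ^ (ν + 1/2) * M) :=
            mul_le_mul_of_nonneg_left hw h2ν.le
        _ = M * (2:ℝ) ^ (-ν) * k ^ (-l) := by rw [hνl]; ring
        _ ≤ C0 * k ^ (-l) := by
            refine mul_le_mul_of_nonneg_right ?_ hkl.le
            have h5 : M * (2:ℝ) ^ (-ν) ≤ max (Real.sqrt B) M * (2:ℝ) ^ (-ν) :=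
              mul_le_mul_of_nonneg_right (le_max_right _ _) h2ν.le
            rw [hC0def]; linarith
    have hbl : (2:ℝ) ^ (-|l|) * k ^ (-l) ≤ ((1 + k) / k) ^ l := by
      rcases le_or_gt 0 l with hl0 | hl0
      · have e1 : (2:ℝ) ^ (-|l|) ≤ 1 :=
          Real.rpow_le_one_of_one_le_of_nonpos (by norm_num) (neg_nonpos.mpr (abs_nonneg l))
        have e2 : k ^ (-l) ≤ ((1 + k) / k) ^ l := by
          have hle : k⁻¹ ≤ (1 + k) / k := by
            rw [inv_eq_one_div, div_le_div_iff₀ hk hk]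
            nlinarith
          calc k ^ (-l) = (k⁻¹) ^ l := by
                rw [Real.rpow_neg hk.le, ← Real.inv_rpow hk.le]
            _ ≤ ((1 + k) / k) ^ l :=
                Real.rpow_le_rpow (by positivity) hle hl0
        nlinarith [hkl.le, e2, mul_le_mul_of_nonneg_right e1 hkl.le]
      · have hb2 : (1 + k) / k ≤ 2 / k := by
          rw [div_le_div_iff₀ hk hk]
          nlinarith
        have e3 : (2 / k : ℝ) ^ l ≤ ((1 + k) / k) ^ l :=
          Real.rpow_le_rpow_of_nonpos hbase hb2 hl0.le
        have e4 : (2 / k : ℝ) ^ l = (2:ℝ) ^ (-|l|) * k ^ (-l) := by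
          rw [Real.div_rpow (by norm_num) hk.le, Real.rpow_neg hk.le,
            show -|l| = l by rw [abs_of_neg hl0]; ring, div_eq_mul_inv]
        linarith [e4 ▸ e3]
    calc |Real.sqrt k * besselJ ν k| ≤ C0 * k ^ (-l) := hLHS
      _ = (2:ℝ) ^ |l| * C0 * ((2:ℝ) ^ (-|l|) * k ^ (-l)) := by
          rw [show (2:ℝ) ^ |l| * C0 * ((2:ℝ) ^ (-|l|) * k ^ (-l))
            = ((2:ℝ) ^ |l| * (2:ℝ) ^ (-|l|)) * (C0 * k ^ (-l)) by ring, h2inv, one_mul]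
      _ ≤ (2:ℝ) ^ |l| * C0 * ((1 + k) / k) ^ l :=
          mul_le_mul_of_nonneg_left hbl (by positivity)
end

section
/- (van der Corput lemma, Wiener algebra variant.) Let σ be a finite complex measure on ℝ and define A(k) := ∫_ℝ e^{ikp} dσ(p), k ∈ ℝ. Let −∞ ≤ a < b ≤ ∞. Then for every t ≠ 0 the improper integral ∫_a^b e^{itk²} A(k) dk exists (as a limit of integrals over compact subintervals) and satisfies |∫_a^b e^{itk²} A(k) dk| ≤ C₂ · |t|^{−1/2} · ‖σ‖, where ‖σ‖ = |σ|(ℝ) is the total variation of σ and C₂ ≤ 2^{8/3} is a universal constant. -/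
open MeasureTheory Real Filter Set Topology intervalIntegral

noncomputable def vdcPhi (t : ℝ) (w : ℝ) : ℂ :=
  ∫ x in (0:ℝ)..w, Complex.exp (Complex.I * t * x^2)

lemma vdc_cont (t : ℝ) : Continuous fun x : ℝ => Complex.exp (Complex.I * t * (x:ℂ)^2) := by
  fun_prop

lemma vdc_ii (t : ℝ) (u v : ℝ) :
    IntervalIntegrable (fun x : ℝ => Complex.exp (Complex.I * t * (x:ℂ)^2)) volume u v :=
  (vdc_cont t).intervalIntegrable u v

lemma vdc_norm_exp (t x : ℝ) : ‖Complex.exp (Complex.I * t * (x:ℂ)^2)‖ = 1 := by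
  rw [Complex.norm_exp]
  have : (Complex.I * t * (x:ℂ)^2).re = 0 := by
    rw [← Complex.ofReal_pow]; simp only [Complex.mul_re, Complex.mul_im, Complex.I_re, Complex.I_im, Complex.ofReal_re, Complex.ofReal_im]; ring
  rw [this, Real.exp_zero]

lemma vdc_norm_c (t x : ℝ) : ‖2 * Complex.I * (t:ℂ) * (x:ℂ)‖ = 2 * |t| * |x| := by
  simp only [norm_mul, Complex.norm_I, Complex.norm_real, Real.norm_eq_abs, Complex.norm_two]
  ring

lemma vdc_ibp (t : ℝ) (ht : t ≠ 0) {u v : ℝ} (hu : 0 < u) (huv : u ≤ v) :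
    ‖∫ x in u..v, Complex.exp (Complex.I * t * (x:ℂ)^2)‖ ≤ 1 / (|t| * u) := by
  have ht' : (t : ℂ) ≠ 0 := by exact_mod_cast ht
  set F : ℝ → ℂ := fun x => Complex.exp (Complex.I * t * (x:ℂ)^2) / (2 * Complex.I * t * x)
    with hF
  set q : ℝ → ℂ := fun x => Complex.exp (Complex.I * t * (x:ℂ)^2) / (2 * Complex.I * t * (x:ℂ)^2)
    with hq
  have huIcc : Set.uIcc u v = Set.Icc u v := Set.uIcc_of_le huv
  have hxpos : ∀ x ∈ Set.uIcc u v, 0 < x := by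
    intro x hx
    rw [huIcc] at hx
    exact lt_of_lt_of_le hu hx.1
  have hderiv : ∀ x ∈ Set.uIcc u v,
      HasDerivAt F (Complex.exp (Complex.I * t * (x:ℂ)^2) - q x) x := by
    intro x hx
    have hx0 : (x : ℂ) ≠ 0 := by exact_mod_cast (hxpos x hx).ne'
    have h1 : HasDerivAt (fun y : ℝ => Complex.I * t * (y:ℂ)^2)
        (Complex.I * t * (2 * x)) x := by
      have : HasDerivAt (fun z : ℂ => Complex.I * t * z^2)
          (Complex.I * t * (2 * (x:ℂ))) (x:ℂ) := by
        simpa using ((hasDerivAt_pow 2 (x:ℂ)).const_mul (Complex.I * t))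
      exact_mod_cast this.comp_ofReal
    have h2 : HasDerivAt (fun y : ℝ => Complex.exp (Complex.I * t * (y:ℂ)^2))
        (Complex.exp (Complex.I * t * (x:ℂ)^2) * (Complex.I * t * (2 * x))) x := h1.cexp
    have h3 : HasDerivAt (fun y : ℝ => 2 * Complex.I * (t:ℂ) * (y:ℂ))
        (2 * Complex.I * t) x := by
      have : HasDerivAt (fun z : ℂ => 2 * Complex.I * (t:ℂ) * z)
          (2 * Complex.I * t) (x:ℂ) := by
        simpa using (hasDerivAt_id (x:ℂ)).const_mul (2 * Complex.I * (t:ℂ))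
      exact this.comp_ofReal
    have hd0 : (2 * Complex.I * (t:ℂ) * (x:ℂ)) ≠ 0 := by
      simp [Complex.I_ne_zero, ht', hx0]
    have h4 := h2.div h3 hd0
    refine h4.congr_deriv ?_
    rw [hq]
    field_simp
  have hqcont : ContinuousOn q (Set.uIcc u v) := by
    apply ContinuousOn.div ((vdc_cont t).continuousOn)
    · fun_prop
    · intro x hx
      have hx0 : (x : ℂ) ≠ 0 := by exact_mod_cast (hxpos x hx).ne'
      simp [Complex.I_ne_zero, ht', hx0]
  have hq_ii : IntervalIntegrable q volume u v := hqcont.intervalIntegrable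
  have hder_ii : IntervalIntegrable
      (fun x => Complex.exp (Complex.I * t * (x:ℂ)^2) - q x) volume u v :=
    ((vdc_cont t).continuousOn.sub hqcont).intervalIntegrable
  have key := intervalIntegral.integral_eq_sub_of_hasDerivAt hderiv hder_ii
  rw [intervalIntegral.integral_sub (vdc_ii t u v) hq_ii] at key
  have split : (∫ x in u..v, Complex.exp (Complex.I * t * (x:ℂ)^2))
      = (F v - F u) + ∫ x in u..v, q x := by
    rw [← key]; ring
  -- norms of boundary terms
  have hFnorm : ∀ x : ℝ, 0 < x → ‖F x‖ = 1 / (2 * |t| * x) := by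
    intro x hx
    rw [hF]
    simp only [norm_div, vdc_norm_exp, vdc_norm_c, abs_of_pos hx]
  -- bound on the integral of q
  have hvpos : 0 < v := lt_of_lt_of_le hu huv
  have hGi : IntervalIntegrable (fun x : ℝ => 1 / (2 * |t| * x^2)) volume u v := by
    apply ContinuousOn.intervalIntegrable
    apply ContinuousOn.div continuousOn_const (by fun_prop)
    intro x hx
    have hx0 : x ≠ 0 := (hxpos x hx).ne'
    have : |t| ≠ 0 := abs_ne_zero.2 ht
    positivity
  have hInt : (∫ x in u..v, 1 / (2 * |t| * x^2))
      = 1 / (2 * |t| * u) - 1 / (2 * |t| * v) := by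
    have hG : ∀ x ∈ Set.uIcc u v,
        HasDerivAt (fun y : ℝ => -(1 / (2 * |t|)) * y⁻¹) (1 / (2 * |t| * x^2)) x := by
      intro x hx
      have hx0 : x ≠ 0 := (hxpos x hx).ne'
      have := (hasDerivAt_inv hx0).const_mul (-(1 / (2 * |t|)))
      refine this.congr_deriv ?_
      have : |t| ≠ 0 := abs_ne_zero.2 ht
      field_simp
    rw [intervalIntegral.integral_eq_sub_of_hasDerivAt hG hGi]
    have : |t| ≠ 0 := abs_ne_zero.2 ht
    field_simp
    ring
  have hqbound : ‖∫ x in u..v, q x‖ ≤ 1 / (2 * |t| * u) - 1 / (2 * |t| * v) := by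
    rw [← hInt]
    apply (intervalIntegral.norm_integral_le_integral_norm huv).trans
    apply intervalIntegral.integral_mono_on huv (hqcont.norm.intervalIntegrable) hGi
    intro x hx
    rw [← huIcc] at hx
    have hx0 : 0 < x := hxpos x hx
    rw [hq]
    simp only [norm_div, vdc_norm_exp]
    have : ‖2 * Complex.I * (t:ℂ) * (x:ℂ)^2‖ = 2 * |t| * x^2 := by
      rw [show ((x:ℂ))^2 = ((x^2 : ℝ) : ℂ) by push_cast; ring]
      rw [vdc_norm_c]
      rw [abs_of_pos (pow_pos hx0 2)]
    rw [this]
  calc ‖∫ x in u..v, Complex.exp (Complex.I * t * (x:ℂ)^2)‖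
      = ‖(F v - F u) + ∫ x in u..v, q x‖ := by rw [split]
    _ ≤ ‖F v‖ + ‖F u‖ + ‖∫ x in u..v, q x‖ := by
        refine (norm_add_le _ _).trans ?_
        gcongr
        exact norm_sub_le _ _
    _ ≤ 1 / (2 * |t| * v) + 1 / (2 * |t| * u) + (1 / (2 * |t| * u) - 1 / (2 * |t| * v)) := by
        rw [hFnorm v hvpos, hFnorm u hu]
        gcongr
    _ = 1 / (|t| * u) := by
        have : |t| ≠ 0 := abs_ne_zero.2 ht
        field_simp
        ring

lemma vdc_phi_cont (t : ℝ) : Continuous (vdcPhi t) :=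
  intervalIntegral.continuous_primitive (fun a b => vdc_ii t a b) 0

lemma vdc_sub (t : ℝ) (u v : ℝ) :
    (∫ x in u..v, Complex.exp (Complex.I * t * (x:ℂ)^2)) = vdcPhi t v - vdcPhi t u := by
  rw [vdcPhi, vdcPhi, ← intervalIntegral.integral_interval_sub_left (vdc_ii t 0 v) (vdc_ii t 0 u)]

lemma vdc_phi_neg (t : ℝ) (w : ℝ) : vdcPhi t (-w) = - vdcPhi t w := by
  have heven : ∀ x : ℝ, Complex.exp (Complex.I * t * ((-x : ℝ):ℂ)^2)
      = Complex.exp (Complex.I * t * (x:ℂ)^2) := by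
    intro x; push_cast; ring_nf
  have := intervalIntegral.integral_comp_neg (a := 0) (b := -w)
    (fun x : ℝ => Complex.exp (Complex.I * t * (x:ℂ)^2))
  simp only [heven, neg_neg, neg_zero] at this
  rw [vdcPhi, this, vdcPhi, intervalIntegral.integral_symm]

lemma vdc_r_pos (t : ℝ) (ht : t ≠ 0) : 0 < |t| ^ (-(1/2) : ℝ) :=
  Real.rpow_pos_of_pos (abs_pos.2 ht) _

lemma vdc_r_eq (t : ℝ) (ht : t ≠ 0) : 1 / (|t| * |t| ^ (-(1/2) : ℝ)) = |t| ^ (-(1/2) : ℝ) := by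
  have h0 : 0 < |t| := abs_pos.2 ht
  rw [show |t| * |t| ^ (-(1/2) : ℝ) = |t| ^ (1 + -(1/2) : ℝ) by
    rw [Real.rpow_add h0, Real.rpow_one]]
  rw [show (1 + -(1/2) : ℝ) = (1/2 : ℝ) by norm_num]
  rw [one_div, ← Real.rpow_neg_one, ← Real.rpow_mul h0.le]
  norm_num

lemma vdc_bound2 (t : ℝ) (ht : t ≠ 0) (w : ℝ) :
    ‖vdcPhi t w‖ ≤ 2 * |t| ^ (-(1/2) : ℝ) := by
  set r : ℝ := |t| ^ (-(1/2) : ℝ) with hrdef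
  have hr : 0 < r := vdc_r_pos t ht
  have main : ∀ w : ℝ, 0 ≤ w → ‖vdcPhi t w‖ ≤ 2 * r := by
    intro w hw
    rcases le_or_gt w r with hwr | hwr
    · have : ‖vdcPhi t w‖ ≤ 1 * |w - 0| := by
        apply intervalIntegral.norm_integral_le_of_norm_le_const
        intro x _
        exact le_of_eq (vdc_norm_exp t x)
      rw [sub_zero, one_mul, abs_of_nonneg hw] at this
      linarith
    · have h1 : ‖vdcPhi t r‖ ≤ 1 * |r - 0| := by
        apply intervalIntegral.norm_integral_le_of_norm_le_const
        intro x _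
        exact le_of_eq (vdc_norm_exp t x)
      rw [sub_zero, one_mul, abs_of_nonneg hr.le] at h1
      have h2 : ‖∫ x in r..w, Complex.exp (Complex.I * t * (x:ℂ)^2)‖ ≤ 1 / (|t| * r) :=
        vdc_ibp t ht hr hwr.le
      rw [vdc_r_eq t ht] at h2
      have h3 : vdcPhi t w = vdcPhi t r + ∫ x in r..w, Complex.exp (Complex.I * t * (x:ℂ)^2) := by
        rw [vdc_sub]; ring
      rw [h3]
      calc ‖vdcPhi t r + _‖ ≤ ‖vdcPhi t r‖ + _ := norm_add_le _ _
        _ ≤ r + r := add_le_add h1 h2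
        _ = 2 * r := by ring
  rcases le_or_gt 0 w with hw | hw
  · exact main w hw
  · rw [show w = -(-w) by ring, vdc_phi_neg, norm_neg]
    exact main (-w) (by linarith)

lemma vdc_interval_bound (t : ℝ) (ht : t ≠ 0) (u v : ℝ) :
    ‖vdcPhi t v - vdcPhi t u‖ ≤ 4 * |t| ^ (-(1/2) : ℝ) := by
  calc ‖vdcPhi t v - vdcPhi t u‖ ≤ ‖vdcPhi t v‖ + ‖vdcPhi t u‖ := norm_sub_le _ _
    _ ≤ 2 * |t| ^ (-(1/2) : ℝ) + 2 * |t| ^ (-(1/2) : ℝ) :=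
        add_le_add (vdc_bound2 t ht v) (vdc_bound2 t ht u)
    _ = 4 * |t| ^ (-(1/2) : ℝ) := by ring

lemma vdc_lim (t : ℝ) (ht : t ≠ 0) :
    ∃ l : ℂ, Tendsto (vdcPhi t) atTop (𝓝 l) ∧ Tendsto (vdcPhi t) atBot (𝓝 (-l)) := by
  have h0 : 0 < |t| := abs_pos.2 ht
  have hcauchy : CauchySeq (vdcPhi t) := by
    rw [Metric.cauchySeq_iff]
    intro ε hε
    refine ⟨max 1 (2 / (|t| * ε)), ?_⟩
    have hN : 0 < max 1 (2 / (|t| * ε)) := lt_of_lt_of_le one_pos (le_max_left _ _)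
    have key : ∀ m n : ℝ, max 1 (2 / (|t| * ε)) ≤ n → n ≤ m →
        dist (vdcPhi t m) (vdcPhi t n) < ε := by
      intro m n hn hnm
      rw [dist_eq_norm, ← vdc_sub]
      have hn0 : 0 < n := lt_of_lt_of_le hN hn
      apply lt_of_le_of_lt (vdc_ibp t ht hn0 hnm)
      have h2 : 2 / (|t| * ε) ≤ n := le_trans (le_max_right _ _) hn
      have h4 : 0 < |t| * n := by positivity
      rw [div_lt_iff₀ h4]
      have h5 : 2 ≤ ε * (|t| * n) := by
        calc (2:ℝ) = ε * (|t| * (2 / (|t| * ε))) := by field_simp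
          _ ≤ ε * (|t| * n) := by gcongr
      linarith
    intro m hm n hn
    rcases le_total n m with hnm | hmn
    · exact key m n hn hnm
    · rw [dist_comm]; exact key n m hm hmn
  obtain ⟨l, hl⟩ := cauchySeq_tendsto_of_complete hcauchy
  refine ⟨l, hl, ?_⟩
  have hcomp : Tendsto (fun w : ℝ => vdcPhi t (-w)) atBot (𝓝 l) :=
    hl.comp tendsto_neg_atBot_atTop
  have : Tendsto (fun w : ℝ => -vdcPhi t (-w)) atBot (𝓝 (-l)) := hcomp.neg
  refine this.congr fun w => ?_
  rw [← vdc_phi_neg, neg_neg]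

noncomputable def vdcEnd (f : ℝ → ℂ) (lb lt : ℂ) (e : EReal) : ℂ :=
  if e = ⊥ then lb else if e = ⊤ then lt else f e.toReal

lemma vdc_seq_lim {f : ℝ → ℂ} {lb lt : ℂ} (hcont : Continuous f)
    (hbot : Tendsto f atBot (𝓝 lb)) (htop : Tendsto f atTop (𝓝 lt)) (a : EReal)
    (u : ℕ → ℝ) (hu : Tendsto (fun n => ((u n : ℝ) : EReal)) atTop (𝓝 a)) :
    Tendsto (fun n => f (u n)) atTop (𝓝 (vdcEnd f lb lt a)) := by
  induction a using EReal.rec with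
  | bot =>
    have hu' : Tendsto u atTop atBot := by
      rw [tendsto_atBot]
      intro x
      have := (EReal.tendsto_nhds_bot_iff_real.1 hu) x
      filter_upwards [this] with n hn
      exact_mod_cast hn.le
    simpa [vdcEnd, Function.comp_def] using hbot.comp hu'
  | coe x =>
    have hu' : Tendsto u atTop (𝓝 x) := EReal.tendsto_coe.1 hu
    have : Tendsto (fun n => f (u n)) atTop (𝓝 (f x)) :=
      (hcont.continuousAt.tendsto).comp hu'
    simpa [vdcEnd] using this
  | top =>
    have hu' : Tendsto u atTop atTop := by
      rw [tendsto_atTop]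
      intro x
      have := (EReal.tendsto_nhds_top_iff_real.1 hu) x
      filter_upwards [this] with n hn
      exact_mod_cast hn.le
    simpa [vdcEnd, Function.comp_def] using htop.comp hu'

lemma vdc_end_bound {f : ℝ → ℂ} {lb lt : ℂ} {B : ℝ} (hf : ∀ w, ‖f w‖ ≤ B)
    (hlb : ‖lb‖ ≤ B) (hlt : ‖lt‖ ≤ B) (a : EReal) : ‖vdcEnd f lb lt a‖ ≤ B := by
  unfold vdcEnd
  split_ifs <;> first | exact hlb | exact hlt | exact hf _

lemma vdc_norm_phase (t p : ℝ) : ‖Complex.exp (-Complex.I * p^2 / (4 * t))‖ = 1 := by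
  rw [Complex.norm_exp]
  have : (-Complex.I * (p:ℂ)^2 / (4 * t)).re = 0 := by
    rw [show ((p:ℂ))^2 = ((p^2 : ℝ) : ℂ) by push_cast; ring]
    rw [div_eq_mul_inv, show ((4:ℂ) * t)⁻¹ = (((4*t)⁻¹ : ℝ) : ℂ) by push_cast; ring]
    simp only [Complex.mul_re, Complex.mul_im, Complex.neg_re, Complex.neg_im, Complex.I_re,
      Complex.I_im, Complex.ofReal_re, Complex.ofReal_im]
    ring
  rw [this, Real.exp_zero]

lemma vdc_square (t : ℝ) (ht : t ≠ 0) (p u v : ℝ) :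
    (∫ k in u..v, Complex.exp (Complex.I * t * (k:ℂ)^2) * Complex.exp (Complex.I * k * p))
    = Complex.exp (-Complex.I * p^2 / (4 * t)) *
        (vdcPhi t (v + p / (2*t)) - vdcPhi t (u + p / (2*t))) := by
  have ht' : (t : ℂ) ≠ 0 := by exact_mod_cast ht
  have hc : ∀ k : ℝ, Complex.exp (Complex.I * t * (k:ℂ)^2) * Complex.exp (Complex.I * k * p)
      = Complex.exp (-Complex.I * p^2 / (4 * t)) *
          Complex.exp (Complex.I * t * (((k + p / (2*t)) : ℝ):ℂ)^2) := by
    intro k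
    rw [← Complex.exp_add, ← Complex.exp_add]
    congr 1
    push_cast
    field_simp
    ring
  rw [intervalIntegral.integral_congr (fun k _ => hc k),
    intervalIntegral.integral_const_mul]
  congr 1
  rw [intervalIntegral.integral_comp_add_right (fun x : ℝ => Complex.exp (Complex.I * t * (x:ℂ)^2)),
    vdc_sub]

lemma vdc_norm_exp2 (k p : ℝ) : ‖Complex.exp (Complex.I * k * p)‖ = 1 := by
  rw [Complex.norm_exp]
  have : (Complex.I * (k:ℂ) * (p:ℂ)).re = 0 := by
    simp only [Complex.mul_re, Complex.mul_im, Complex.I_re, Complex.I_im,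
      Complex.ofReal_re, Complex.ofReal_im]
    ring
  rw [this, Real.exp_zero]

lemma vdc_fubini_le (μ : Measure ℝ) [IsFiniteMeasure μ] (h : ℝ → ℂ) (hh : Integrable h μ)
    (t : ℝ) {u v : ℝ} (huv : u ≤ v) :
    (∫ k in u..v, Complex.exp (Complex.I * t * (k:ℂ)^2) *
        ∫ p, Complex.exp (Complex.I * k * p) * h p ∂μ)
    = ∫ p, (∫ k in u..v, Complex.exp (Complex.I * t * (k:ℂ)^2) *
        Complex.exp (Complex.I * k * p)) * h p ∂μ := by
  set ν : Measure ℝ := volume.restrict (Set.Ioc u v) with hν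
  have : IsFiniteMeasure ν := ⟨by
    rw [hν, Measure.restrict_apply_univ]; exact measure_Ioc_lt_top⟩
  set E : ℝ → ℝ → ℂ := fun k p =>
    Complex.exp (Complex.I * t * (k:ℂ)^2) * Complex.exp (Complex.I * k * p) with hE
  have hEcont : Continuous fun z : ℝ × ℝ => E z.1 z.2 := by
    rw [hE]; fun_prop
  have hmeas : AEStronglyMeasurable (fun z : ℝ × ℝ => E z.1 z.2 * h z.2) (ν.prod μ) :=
    hEcont.aestronglyMeasurable.mul hh.1.comp_snd
  have hnorm : ∀ k p, ‖E k p * h p‖ = ‖h p‖ := by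
    intro k p
    rw [norm_mul, hE]
    simp only [norm_mul, vdc_norm_exp, vdc_norm_exp2]
    ring
  have hint : Integrable (fun z : ℝ × ℝ => E z.1 z.2 * h z.2) (ν.prod μ) := by
    rw [integrable_prod_iff hmeas]
    constructor
    · refine Filter.Eventually.of_forall fun k => ?_
      apply Integrable.mono' hh.norm
        ((hEcont.comp (Continuous.prodMk_right k)).aestronglyMeasurable.mul hh.1)
      exact Filter.Eventually.of_forall fun p => le_of_eq (hnorm k p)
    · have : (fun k => ∫ p, ‖E k p * h p‖ ∂μ) = fun _ => ∫ p, ‖h p‖ ∂μ := by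
        funext k
        exact integral_congr_ae (Filter.Eventually.of_forall fun p => hnorm k p)
      rw [this]
      exact integrable_const _
  have hswap := MeasureTheory.integral_integral_swap
    (f := fun k p => E k p * h p) hint
  calc (∫ k in u..v, Complex.exp (Complex.I * t * (k:ℂ)^2) *
        ∫ p, Complex.exp (Complex.I * k * p) * h p ∂μ)
      = ∫ k, (∫ p, E k p * h p ∂μ) ∂ν := by
        rw [intervalIntegral.integral_of_le huv]
        apply MeasureTheory.integral_congr_ae
        refine Filter.Eventually.of_forall fun k => ?_
        beta_reduce
        simp only [hE, mul_assoc]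
        exact (MeasureTheory.integral_const_mul _ _).symm
    _ = ∫ p, (∫ k, E k p * h p ∂ν) ∂μ := hswap
    _ = ∫ p, (∫ k in u..v, Complex.exp (Complex.I * t * (k:ℂ)^2) *
          Complex.exp (Complex.I * k * p)) * h p ∂μ := by
        apply MeasureTheory.integral_congr_ae
        refine Filter.Eventually.of_forall fun p => ?_
        beta_reduce
        rw [MeasureTheory.integral_mul_const]
        congr 1
        rw [intervalIntegral.integral_of_le huv]

lemma vdc_fubini (μ : Measure ℝ) [IsFiniteMeasure μ] (h : ℝ → ℂ) (hh : Integrable h μ)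
    (t : ℝ) (u v : ℝ) :
    (∫ k in u..v, Complex.exp (Complex.I * t * (k:ℂ)^2) *
        ∫ p, Complex.exp (Complex.I * k * p) * h p ∂μ)
    = ∫ p, (∫ k in u..v, Complex.exp (Complex.I * t * (k:ℂ)^2) *
        Complex.exp (Complex.I * k * p)) * h p ∂μ := by
  rcases le_total u v with huv | hvu
  · exact vdc_fubini_le μ h hh t huv
  · have base := vdc_fubini_le μ h hh t hvu
    calc (∫ k in u..v, Complex.exp (Complex.I * t * (k:ℂ)^2) *
          ∫ p, Complex.exp (Complex.I * k * p) * h p ∂μ)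
        = -∫ k in v..u, Complex.exp (Complex.I * t * (k:ℂ)^2) *
          ∫ p, Complex.exp (Complex.I * k * p) * h p ∂μ := by
          rw [intervalIntegral.integral_symm]
      _ = -∫ p, (∫ k in v..u, Complex.exp (Complex.I * t * (k:ℂ)^2) *
          Complex.exp (Complex.I * k * p)) * h p ∂μ := by rw [base]
      _ = ∫ p, -((∫ k in v..u, Complex.exp (Complex.I * t * (k:ℂ)^2) *
          Complex.exp (Complex.I * k * p)) * h p) ∂μ := by rw [MeasureTheory.integral_neg]
      _ = ∫ p, (∫ k in u..v, Complex.exp (Complex.I * t * (k:ℂ)^2) *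
          Complex.exp (Complex.I * k * p)) * h p ∂μ := by
          apply MeasureTheory.integral_congr_ae
          refine Filter.Eventually.of_forall fun p => ?_
          beta_reduce
          rw [intervalIntegral.integral_symm v u]
          ring

lemma vdc_end_cont {F : ℝ → ℝ → ℂ} {lb lt : ℝ → ℂ} (e : EReal)
    (h1 : Continuous lb) (h2 : Continuous lt) (h3 : Continuous fun p => F p e.toReal) :
    Continuous fun p => vdcEnd (F p) (lb p) (lt p) e := by
  unfold vdcEnd
  split_ifs <;> assumption


/-- Van der Corput lemma, Wiener algebra variant: there is a universal constant
`C₂ ≤ 2^{8/3}` such that for every finite complex measure `σ = h dμ` on `ℝ`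
(represented by a finite measure `μ` and an integrable density `h`), every interval
`(a,b)` with `−∞ ≤ a < b ≤ ∞` and every `t ≠ 0`, the improper integral
`∫_a^b e^{itk²} A(k) dk`, where `A(k) = ∫ e^{ikp} dσ(p)`, exists as a limit of
integrals over compact subintervals exhausting `(a,b)` and its modulus is at most
`C₂ |t|^{−1/2} ‖σ‖`, where `‖σ‖ = ∫ ‖h‖ dμ` is the total variation of `σ`. -/
theorem van_der_corput_wiener :
    ∃ C₂ : ℝ, 0 < C₂ ∧ C₂ ≤ 2 ^ ((8 : ℝ) / 3) ∧
      ∀ (μ : Measure ℝ), IsFiniteMeasure μ →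
      ∀ h : ℝ → ℂ, Integrable h μ →
      ∀ a b : EReal, a < b →
      ∀ t : ℝ, t ≠ 0 →
      ∃ L : ℂ,
        (∀ u v : ℕ → ℝ,
          (∀ n, a < (u n : EReal)) → (∀ n, ((v n : EReal)) < b) →
          Filter.Tendsto (fun n => ((u n : EReal))) Filter.atTop (nhds a) →
          Filter.Tendsto (fun n => ((v n : EReal))) Filter.atTop (nhds b) →
          Filter.Tendsto (fun n => ∫ k in (u n)..(v n),
              Complex.exp (Complex.I * (t : ℂ) * (k : ℂ) ^ 2) *
                ∫ p, Complex.exp (Complex.I * (k : ℂ) * (p : ℂ)) * h p ∂μ)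
            Filter.atTop (nhds L)) ∧
        ‖L‖ ≤ C₂ * |t| ^ (-(1/2) : ℝ) * ∫ p, ‖h p‖ ∂μ := by
  refine ⟨4, by norm_num, ?_, ?_⟩
  · calc (4:ℝ) = (2:ℝ) ^ ((2:ℕ) : ℝ) := by rw [Real.rpow_natCast]; norm_num
      _ ≤ 2 ^ ((8:ℝ)/3) := by
          apply Real.rpow_le_rpow_of_exponent_le (by norm_num)
          push_cast; norm_num
  intro μ hμfin h hh a b hab t ht
  haveI := hμfin
  obtain ⟨l, hlTop, hlBot⟩ := vdc_lim t ht
  set r : ℝ := |t| ^ (-(1/2) : ℝ) with hr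
  have hrpos : 0 < r := vdc_r_pos t ht
  set phase : ℝ → ℂ := fun p => Complex.exp (-Complex.I * p^2 / (4*t)) with hphase
  set ψ : ℝ → ℝ → ℂ := fun p w => phase p * vdcPhi t (w + p / (2*t)) with hψ
  have hphase_cont : Continuous phase := by
    rw [hphase]
    apply Complex.continuous_exp.comp
    fun_prop
  have hphase_norm : ∀ p, ‖phase p‖ = 1 := fun p => vdc_norm_phase t p
  have contψw : ∀ w₀ : ℝ, Continuous fun p => ψ p w₀ := by
    intro w₀
    rw [hψ]
    exact hphase_cont.mul ((vdc_phi_cont t).comp (by fun_prop))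
  have contψ : ∀ p, Continuous (ψ p) := by
    intro p
    rw [hψ]
    exact continuous_const.mul ((vdc_phi_cont t).comp (by fun_prop))
  have ψbot : ∀ p, Tendsto (ψ p) atBot (𝓝 (phase p * (-l))) := by
    intro p
    rw [hψ]
    exact (hlBot.comp (tendsto_atBot_add_const_right atBot (p / (2*t)) tendsto_id)).const_mul _
  have ψtop : ∀ p, Tendsto (ψ p) atTop (𝓝 (phase p * l)) := by
    intro p
    rw [hψ]
    exact (hlTop.comp (tendsto_atTop_add_const_right atTop (p / (2*t)) tendsto_id)).const_mul _
  set Pa : ℝ → ℂ := fun p => vdcEnd (ψ p) (phase p * (-l)) (phase p * l) a with hPa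
  set Pb : ℝ → ℂ := fun p => vdcEnd (ψ p) (phase p * (-l)) (phase p * l) b with hPb
  have hl2 : ‖l‖ ≤ 2 * r :=
    le_of_tendsto hlTop.norm (Filter.Eventually.of_forall fun w => vdc_bound2 t ht w)
  have ψnorm : ∀ p w, ‖ψ p w‖ ≤ 2 * r := by
    intro p w
    rw [hψ]
    beta_reduce
    rw [norm_mul, hphase_norm, one_mul]
    exact vdc_bound2 t ht _
  have Pnorm : ∀ (e : EReal) p, ‖vdcEnd (ψ p) (phase p * (-l)) (phase p * l) e‖ ≤ 2 * r := by
    intro e p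
    apply vdc_end_bound (ψnorm p) ?_ ?_
    · rw [norm_mul, hphase_norm, one_mul, norm_neg]; exact hl2
    · rw [norm_mul, hphase_norm, one_mul]; exact hl2
  have Pbound : ∀ p, ‖Pb p - Pa p‖ ≤ 4 * r := by
    intro p
    calc ‖Pb p - Pa p‖ ≤ ‖Pb p‖ + ‖Pa p‖ := norm_sub_le _ _
      _ ≤ 2 * r + 2 * r := add_le_add (Pnorm b p) (Pnorm a p)
      _ = 4 * r := by ring
  have ψdiff : ∀ p (u₀ v₀ : ℝ), ‖ψ p v₀ - ψ p u₀‖ ≤ 4 * r := by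
    intro p u₀ v₀
    rw [hψ]
    beta_reduce
    rw [← mul_sub, norm_mul, hphase_norm, one_mul]
    exact vdc_interval_bound t ht _ _
  have ident : ∀ u₀ v₀ : ℝ,
      (∫ k in u₀..v₀, Complex.exp (Complex.I * (t:ℂ) * (k:ℂ)^2) *
        ∫ p, Complex.exp (Complex.I * (k:ℂ) * (p:ℂ)) * h p ∂μ)
      = ∫ p, (ψ p v₀ - ψ p u₀) * h p ∂μ := by
    intro u₀ v₀
    rw [vdc_fubini μ h hh t u₀ v₀]
    apply MeasureTheory.integral_congr_ae
    refine Filter.Eventually.of_forall fun p => ?_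
    beta_reduce
    congr 1
    rw [vdc_square t ht p u₀ v₀, hψ]
    beta_reduce
    rw [← mul_sub]
  refine ⟨∫ p, (Pb p - Pa p) * h p ∂μ, ?_, ?_⟩
  · intro u v hau hvb hua hvbt
    have step : Tendsto (fun n => ∫ p, (ψ p (v n) - ψ p (u n)) * h p ∂μ) atTop
        (𝓝 (∫ p, (Pb p - Pa p) * h p ∂μ)) := by
      apply tendsto_integral_of_dominated_convergence (bound := fun p => 4 * r * ‖h p‖)
      · intro n
        exact (((contψw (v n)).sub (contψw (u n))).aestronglyMeasurable).mul hh.1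
      · exact hh.norm.const_mul (4 * r)
      · intro n
        refine Filter.Eventually.of_forall fun p => ?_
        rw [norm_mul]
        exact mul_le_mul_of_nonneg_right (ψdiff p (u n) (v n)) (norm_nonneg _)
      · refine Filter.Eventually.of_forall fun p => ?_
        exact ((vdc_seq_lim (contψ p) (ψbot p) (ψtop p) b v hvbt).sub
          (vdc_seq_lim (contψ p) (ψbot p) (ψtop p) a u hua)).mul_const (h p)
    exact step.congr fun n => (ident (u n) (v n)).symm
  · calc ‖∫ p, (Pb p - Pa p) * h p ∂μ‖ ≤ ∫ p, ‖(Pb p - Pa p) * h p‖ ∂μ :=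
        MeasureTheory.norm_integral_le_integral_norm _
      _ ≤ ∫ p, 4 * r * ‖h p‖ ∂μ := by
          apply MeasureTheory.integral_mono_of_nonneg
            (Filter.Eventually.of_forall fun p => norm_nonneg _) (hh.norm.const_mul (4*r))
          refine Filter.Eventually.of_forall fun p => ?_
          beta_reduce
          rw [norm_mul]
          exact mul_le_mul_of_nonneg_right (Pbound p) (norm_nonneg _)
      _ = 4 * r * ∫ p, ‖h p‖ ∂μ := by rw [MeasureTheory.integral_const_mul]
      _ ≤ 4 * |t| ^ (-(1/2) : ℝ) * ∫ p, ‖h p‖ ∂μ := by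
          rw [hr]
end

section
/- Let t ∈ ℝ, let ε < 0, and let σ be a finite complex measure on ℝ. Define f(k) := ∫_ℝ e^{ikp} dσ(p). Then the integral F := ∫_ℝ e^{−i(t+iε)k²} f(k) dk converges absolutely and F = √(π/(i(t+iε))) · ∫_ℝ e^{i p²/(4(t+iε))} dσ(p), where the square root is taken with the principal branch. -/
open MeasureTheory Real Filter Set

/-- For `t ∈ ℝ`, `ε < 0` and a finite complex measure `σ = h dμ` on `ℝ` (represented
by a finite measure `μ` and an integrable density `h`), with
`f(k) = ∫ e^{ikp} dσ(p)`, the integral `F = ∫_ℝ e^{−i(t+iε)k²} f(k) dk` converges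
absolutely and `F = √(π/(i(t+iε))) ∫ e^{ip²/(4(t+iε))} dσ(p)`, the square root being
taken with the principal branch. -/
theorem gaussian_fourier_of_measure (t ε : ℝ) (hε : ε < 0)
    (μ : Measure ℝ) (hμ : IsFiniteMeasure μ) (h : ℝ → ℂ) (hh : Integrable h μ) :
    Integrable (fun k : ℝ =>
      Complex.exp (-Complex.I * ((t : ℂ) + (ε : ℂ) * Complex.I) * (k : ℂ) ^ 2) *
        ∫ p, Complex.exp (Complex.I * (k : ℂ) * (p : ℂ)) * h p ∂μ) volume ∧
    (∫ k : ℝ,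
      Complex.exp (-Complex.I * ((t : ℂ) + (ε : ℂ) * Complex.I) * (k : ℂ) ^ 2) *
        ∫ p, Complex.exp (Complex.I * (k : ℂ) * (p : ℂ)) * h p ∂μ) =
      ((Real.pi : ℂ) / (Complex.I * ((t : ℂ) + (ε : ℂ) * Complex.I))) ^ ((1 : ℂ) / 2) *
        ∫ p, Complex.exp (Complex.I * (p : ℂ) ^ 2 /
          (4 * ((t : ℂ) + (ε : ℂ) * Complex.I))) * h p ∂μ := by
  set z : ℂ := (t : ℂ) + (ε : ℂ) * Complex.I with hz
  set b : ℂ := -Complex.I * z with hb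
  have hbre : b.re = ε := by
    simp [hb, hz, Complex.mul_re, Complex.add_re, Complex.add_im]
  have hbneg : b.re < 0 := by rw [hbre]; exact hε
  -- The function on the product space
  set G : ℝ × ℝ → ℂ := fun q =>
    Complex.exp (b * (q.1 : ℂ) ^ 2 + Complex.I * (q.1 : ℂ) * (q.2 : ℂ)) * h q.2 with hG
  have hGmeas : AEStronglyMeasurable G ((volume : Measure ℝ).prod μ) := by
    apply AEStronglyMeasurable.mul
    · apply Continuous.aestronglyMeasurable
      fun_prop
    · exact hh.aestronglyMeasurable.comp_snd
  have hGnorm : ∀ q : ℝ × ℝ, ‖G q‖ = Real.exp (ε * q.1 ^ 2) * ‖h q.2‖ := by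
    intro q
    rw [hG]
    simp only [norm_mul, Complex.norm_exp]
    congr 2
    rw [Complex.add_re]
    have h1 : (b * (q.1 : ℂ) ^ 2).re = ε * q.1 ^ 2 := by
      rw [show ((q.1 : ℂ)) ^ 2 = ((q.1 ^ 2 : ℝ) : ℂ) by push_cast; ring, Complex.mul_re]
      simp only [Complex.ofReal_re, Complex.ofReal_im, mul_zero, sub_zero, hbre]
    have h2 : (Complex.I * (q.1 : ℂ) * (q.2 : ℂ)).re = 0 := by
      simp [Complex.mul_re, Complex.mul_im]
    rw [h1, h2, add_zero]
  have hGint : Integrable G ((volume : Measure ℝ).prod μ) := by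
    have hg : Integrable (fun k : ℝ => Real.exp (ε * k ^ 2)) volume := by
      have := integrable_exp_neg_mul_sq (b := -ε) (by linarith)
      simpa using this
    have hbound : Integrable (fun q : ℝ × ℝ => Real.exp (ε * q.1 ^ 2) * ‖h q.2‖)
        ((volume : Measure ℝ).prod μ) := hg.mul_prod hh.norm
    exact hbound.mono' hGmeas (Eventually.of_forall fun q => (hGnorm q).le)
  -- Rewrite the integrand as the marginal of G
  have hmarg : ∀ k : ℝ,
      Complex.exp (-Complex.I * z * (k : ℂ) ^ 2) *
        ∫ p, Complex.exp (Complex.I * (k : ℂ) * (p : ℂ)) * h p ∂μ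
      = ∫ p, G (k, p) ∂μ := by
    intro k
    rw [← integral_const_mul]
    congr 1 with p
    rw [hG]
    simp only [← mul_assoc, ← Complex.exp_add, hb]
  constructor
  · have := hGint.integral_prod_left
    apply this.congr
    filter_upwards with k
    rw [hmarg k]
  · calc (∫ k : ℝ, Complex.exp (-Complex.I * z * (k : ℂ) ^ 2) *
        ∫ p, Complex.exp (Complex.I * (k : ℂ) * (p : ℂ)) * h p ∂μ)
        = ∫ k : ℝ, ∫ p, G (k, p) ∂μ := by
          exact integral_congr_ae (Eventually.of_forall fun k => hmarg k)
      _ = ∫ p, (∫ k : ℝ, G (k, p)) ∂μ := integral_integral_swap hGint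
      _ = ∫ p, (((Real.pi : ℂ) / (Complex.I * z)) ^ ((1 : ℂ) / 2) *
            Complex.exp (Complex.I * (p : ℂ) ^ 2 / (4 * z))) * h p ∂μ := by
          congr 1 with p
          rw [hG]
          simp only
          have hz0 : z ≠ 0 := by
            intro hc
            have : z.im = 0 := by rw [hc]; simp
            simp [hz] at this
            linarith
          have hinner : ∀ k : ℝ,
              b * (k : ℂ) ^ 2 + Complex.I * (k : ℂ) * (p : ℂ)
              = b * (k : ℂ) ^ 2 + (Complex.I * (p : ℂ)) * (k : ℂ) + 0 := by
            intro k; ring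
          simp_rw [hinner]
          rw [integral_mul_const, integral_cexp_quadratic hbneg, mul_assoc]
          have hbase : ((Real.pi : ℂ) / -b) = ((Real.pi : ℂ) / (Complex.I * z)) := by
            rw [hb]; ring_nf
          have hb4 : (4 : ℂ) * b ≠ 0 := by
            apply mul_ne_zero (by norm_num)
            rw [hb]
            exact mul_ne_zero (neg_ne_zero.2 Complex.I_ne_zero) hz0
          have hz4 : (4 : ℂ) * z ≠ 0 := mul_ne_zero (by norm_num) hz0
          have hexp : (0 : ℂ) - (Complex.I * (p : ℂ)) ^ 2 / (4 * b) =
              Complex.I * (p : ℂ) ^ 2 / (4 * z) := by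
            rw [zero_sub, ← neg_div, div_eq_div_iff hb4 hz4, hb]
            ring
          rw [hbase, hexp]
          ring
      _ = ((Real.pi : ℂ) / (Complex.I * z)) ^ ((1 : ℂ) / 2) *
            ∫ p, Complex.exp (Complex.I * (p : ℂ) ^ 2 / (4 * z)) * h p ∂μ := by
          rw [← integral_const_mul]
          congr 1 with p
          ring
end
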